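/- arXiv:1201.5994 — 4 statements merged into one kernel-verified Lean document; each statement's English description precedes it below -/
import Mathlib

section
/- Let q be a prime power and let S be a finite set of vectors of 𝔽_q^k (k ≥ 2) with |S| ≥ k and with the property that every subset of S of size k is a basis of 𝔽_q^k. Then for every subset Y of S of size k − 2, the number of hyperplanes H of 𝔽_q^k (i.e., (k−1)-dimensional linear subspaces) satisfying Y ⊆ H and H ∩ S = Y is exactly q + k − 1 − |S| (in particular |S| ≤ q + k − 1). -/
open Module Submodule

lemma aux_finrank_comap_mkQ {F V : Type*} [Field F] [AddCommGroup V] [Module F V]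
    [FiniteDimensional F V] (W : Submodule F V) (L : Submodule F (V ⧸ W)) :
    finrank F (L.comap W.mkQ) = finrank F L + finrank F W := by
  set H := L.comap W.mkQ with hH
  have hWH : W ≤ H := by
    intro x hx
    simp only [hH, Submodule.mem_comap, Submodule.mkQ_apply,
      (Submodule.Quotient.mk_eq_zero W).mpr hx]
    exact L.zero_mem
  set φ := W.mkQ.domRestrict H with hφ
  have hrange : LinearMap.range φ = L := by
    rw [hφ, LinearMap.range_domRestrict, hH,
      Submodule.map_comap_eq_of_surjective (Submodule.mkQ_surjective W)]
  have hker : LinearMap.ker φ = W.comap H.subtype := by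
    rw [hφ, LinearMap.ker_domRestrict, Submodule.ker_mkQ]
  have h := LinearMap.finrank_range_add_finrank_ker φ
  rw [hrange, hker] at h
  rw [(Submodule.comapSubtypeEquivOfLe hWH).finrank_eq] at h
  exact h.symm

lemma aux_card_lines (F : Type*) [Field F] [Fintype F] (Q : Type*) [AddCommGroup Q] [Module F Q]
    [Finite Q] (h2 : finrank F Q = 2) :
    Nat.card {L : Submodule F Q // finrank F L = 1} = Fintype.card F + 1 := by
  classical
  have : Fintype Q := Fintype.ofFinite Q
  have hsub : Finite (Submodule F Q) :=
    Finite.of_injective (fun L : Submodule F Q => (L : Set Q)) SetLike.coe_injective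
  have : Fintype (Submodule F Q) := Fintype.ofFinite _
  set q := Fintype.card F with hq
  have hq1 : 1 ≤ q := Fintype.card_pos
  have hcardQ : Fintype.card Q = q ^ 2 := by rw [card_eq_pow_finrank (K := F), h2]
  set f : {v : Q // v ≠ 0} → {L : Submodule F Q // finrank F L = 1} :=
    fun v => ⟨Submodule.span F {v.1}, finrank_span_singleton v.2⟩ with hf
  have hfiber : ∀ L : {L : Submodule F Q // finrank F L = 1},
      Fintype.card {v : {v : Q // v ≠ 0} // f v = L} = q - 1 := by
    intro L
    have e : {v : {v : Q // v ≠ 0} // f v = L} ≃ {w : L.1 // w ≠ 0} := by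
      refine ⟨fun v => ⟨⟨v.1.1, ?_⟩, ?_⟩, fun w => ⟨⟨w.1.1, ?_⟩, ?_⟩, ?_, ?_⟩
      · have : Submodule.span F {v.1.1} = L.1 := congrArg Subtype.val v.2
        exact this ▸ Submodule.mem_span_singleton_self _
      · simp only [ne_eq, Submodule.mk_eq_zero]
        exact v.1.2
      · simpa [Submodule.mk_eq_zero] using w.2
      · apply Subtype.ext
        simp only [hf]
        apply le_antisymm
        · rw [Submodule.span_le, Set.singleton_subset_iff]
          exact w.1.2
        · apply ge_of_eq
          apply Submodule.eq_of_le_of_finrank_eq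
          · rw [Submodule.span_le, Set.singleton_subset_iff]
            exact w.1.2
          · rw [L.2, finrank_span_singleton]
            simpa [Submodule.mk_eq_zero] using w.2
      · intro v; ext; rfl
      · intro w; ext; rfl
    rw [Fintype.card_congr e]
    have hcardL : Fintype.card L.1 = q := by
      rw [card_eq_pow_finrank (K := F), L.2, pow_one]
    rw [Fintype.card_subtype_compl (fun w : L.1 => w = 0)]
    rw [hcardL, Fintype.card_subtype_eq (0 : L.1)]
  have htot : Fintype.card {v : Q // v ≠ 0} =
      Fintype.card {L : Submodule F Q // finrank F L = 1} * (q - 1) := by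
    rw [Fintype.card_congr (Equiv.sigmaFiberEquiv f).symm, Fintype.card_sigma]
    simp [hfiber, Finset.sum_const, mul_comm]
  have hnz : Fintype.card {v : Q // v ≠ 0} = q ^ 2 - 1 := by
    rw [Fintype.card_subtype_compl (fun v : Q => v = 0), hcardQ,
      Fintype.card_subtype_eq (0 : Q)]
  rw [hnz] at htot
  rw [Nat.card_eq_fintype_card]
  have hq2 : 2 ≤ q := Fintype.one_lt_card
  obtain ⟨m, hm⟩ : ∃ m, q = m + 1 := ⟨q - 1, by omega⟩
  rw [hm] at htot ⊢
  have h1 : (m + 1) ^ 2 - 1 = (m + 2) * m := by ring_nf; omega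
  rw [h1] at htot
  simp only [Nat.add_sub_cancel] at htot
  have hm0 : 0 < m := by omega
  have := Nat.eq_of_mul_eq_mul_right hm0 htot.symm
  omega


/-- Let `q` be a prime power and let `S` be a finite set of vectors of
`𝔽_q^k` (`k ≥ 2`) with `|S| ≥ k`, such that every subset of `S` of size `k` is a basis of
`𝔽_q^k`.  Then for every subset `Y` of `S` of size `k − 2`, the number of hyperplanes `H`
(i.e. `(k−1)`-dimensional linear subspaces) with `Y ⊆ H` and `H ∩ S = Y` is exactly
`q + k − 1 − |S|`; in particular `|S| ≤ q + k − 1`. -/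
theorem statement3 (p h k : ℕ) (hp : p.Prime) (hh : 1 ≤ h) (hk : 2 ≤ k)
    (F : Type) [Field F] [Fintype F] [DecidableEq F] (hF : Fintype.card F = p ^ h)
    (S : Finset (Fin k → F)) (hSk : k ≤ S.card)
    (harc : ∀ A ⊆ S, A.card = k →
      LinearIndependent F (fun v : {x // x ∈ A} => (v : Fin k → F)) ∧
      Submodule.span F (A : Set (Fin k → F)) = ⊤) :
    S.card ≤ p ^ h + k - 1 ∧
    ∀ Y ⊆ S, Y.card = k - 2 →
      Nat.card {H : Submodule F (Fin k → F) //
          Module.finrank F H = k - 1 ∧ (Y : Set (Fin k → F)) ⊆ H ∧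
          ((H : Set (Fin k → F)) ∩ (S : Set (Fin k → F))) = (Y : Set (Fin k → F))} =
        p ^ h + k - 1 - S.card := by
  classical
  have hkV : finrank F (Fin k → F) = k := by
    rw [Module.finrank_pi, Fintype.card_fin]
  have hindep : ∀ T ⊆ S, T.card ≤ k →
      LinearIndependent F (fun x : (T : Set (Fin k → F)) => (x : Fin k → F)) := by
    intro T hTS hTk
    obtain ⟨A, hTA, hAS, hAk⟩ := Finset.exists_subsuperset_card_eq hTS hTk hSk
    exact LinearIndepOn.mono (v := id) (s := (A : Set (Fin k → F))) (harc A hAS hAk).1 (Finset.coe_subset.2 hTA)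
  have key : ∀ Y ⊆ S, Y.card = k - 2 →
      S.card ≤ p ^ h + k - 1 ∧
      Nat.card {H : Submodule F (Fin k → F) //
          Module.finrank F H = k - 1 ∧ (Y : Set (Fin k → F)) ⊆ H ∧
          ((H : Set (Fin k → F)) ∩ (S : Set (Fin k → F))) = (Y : Set (Fin k → F))} =
        p ^ h + k - 1 - S.card := by
    intro Y hYS hYcard
    set W : Submodule F (Fin k → F) := Submodule.span F (Y : Set (Fin k → F)) with hW
    have hYind := hindep Y hYS (by omega)
    have hWrank : finrank F W = k - 2 := by
      rw [hW, finrank_span_finset_eq_card hYind, hYcard]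
    have hQrank : finrank F ((Fin k → F) ⧸ W) = 2 := by
      have h1 := Submodule.finrank_quotient_add_finrank W
      omega
    have hQfin : Finite ((Fin k → F) ⧸ W) := Quotient.finite _
    set π := W.mkQ with hπ
    -- images of points outside Y are nonzero
    have hnW : ∀ s ∈ S, s ∉ Y → s ∉ W := by
      intro s hs hsY hsW
      have hA : insert s Y ⊆ S := Finset.insert_subset hs hYS
      have hcard : (insert s Y).card ≤ k := by
        rw [Finset.card_insert_of_notMem hsY]; omega
      have hind := hindep _ hA hcard
      rw [Finset.coe_insert] at hind
      have := ((linearIndepOn_id_insert (by simpa using hsY)).mp hind).2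
      exact this hsW
    have hπ0 : ∀ s ∈ S, s ∉ Y → π s ≠ 0 := by
      intro s hs hsY h0
      exact hnW s hs hsY ((Submodule.Quotient.mk_eq_zero W).mp (by simpa [hπ] using h0))
    -- no hyperplane-like subspace can contain Y and two extra points of S
    have hclaim2 : ∀ s ∈ S, ∀ t ∈ S, s ∉ Y → t ∉ Y → s ≠ t →
        ∀ H : Submodule F (Fin k → F), finrank F H = k - 1 →
          (Y : Set (Fin k → F)) ⊆ H → s ∈ H → t ∈ H → False := by
      intro s hs t ht hsY htY hst H hHrank hYH hsH htH
      have hA : insert s (insert t Y) ⊆ S := by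
        refine Finset.insert_subset hs (Finset.insert_subset ht hYS)
      have hcard : (insert s (insert t Y)).card = k := by
        rw [Finset.card_insert_of_notMem (by simp [hst, hsY]),
          Finset.card_insert_of_notMem htY, hYcard]
        omega
      have hspan := (harc _ hA hcard).2
      have hsub : ((insert s (insert t Y) : Finset (Fin k → F)) : Set (Fin k → F)) ⊆ H := by
        simp only [Finset.coe_insert]
        exact Set.insert_subset hsH (Set.insert_subset htH hYH)
      have : (⊤ : Submodule F (Fin k → F)) ≤ H := by
        rw [← hspan]; exact Submodule.span_le.mpr hsub
      have hHtop : H = ⊤ := top_le_iff.mp this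
      rw [hHtop, finrank_top, hkV] at hHrank
      omega
    have hcomapRank : ∀ L : Submodule F ((Fin k → F) ⧸ W),
        finrank F (L.comap π) = finrank F L + (k - 2) := by
      intro L
      rw [hπ, aux_finrank_comap_mkQ, hWrank]
    have hWle : ∀ L : Submodule F ((Fin k → F) ⧸ W), W ≤ L.comap π := by
      intro L x hx
      simp only [Submodule.mem_comap, hπ, Submodule.mkQ_apply,
        (Submodule.Quotient.mk_eq_zero W).mpr hx]
      exact L.zero_mem
    -- the bijection between hyperplanes and lines in the quotient
    set f : {L : Submodule F ((Fin k → F) ⧸ W) //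
          finrank F L = 1 ∧ ∀ s ∈ S, s ∉ Y → π s ∉ L} →
        {H : Submodule F (Fin k → F) //
          Module.finrank F H = k - 1 ∧ (Y : Set (Fin k → F)) ⊆ H ∧
          ((H : Set (Fin k → F)) ∩ (S : Set (Fin k → F))) = (Y : Set (Fin k → F))} := by
      intro L
      refine ⟨L.1.comap π, ?_, ?_, ?_⟩
      · rw [hcomapRank, L.2.1]; omega
      · intro y hy
        exact hWle L.1 (Submodule.subset_span hy)
      · ext x
        simp only [Set.mem_inter_iff, SetLike.mem_coe, Submodule.mem_comap,
          Finset.mem_coe]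
        constructor
        · rintro ⟨hxL, hxS⟩
          by_contra hxY
          exact L.2.2 x (by simpa using hxS) (by simpa using hxY) hxL
        · intro hxY
          have hxY' : x ∈ Y := by simpa using hxY
          exact ⟨hWle L.1 (Submodule.subset_span (by simpa using hxY)),
            by simpa using hYS hxY'⟩
    have hbij : Function.Bijective f := by
      constructor
      · intro L₁ L₂ hL
        have := congrArg Subtype.val hL
        exact Subtype.ext (Submodule.comap_injective_of_surjective
          (Submodule.mkQ_surjective W) this)
      · rintro ⟨H, hHrank, hYH, hHS⟩
        have hWH : W ≤ H := Submodule.span_le.mpr hYH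
        have hcm : (H.map π).comap π = H := by
          rw [hπ, Submodule.comap_map_mkQ, sup_eq_right.mpr hWH]
        have hLrank : finrank F (H.map π) = 1 := by
          have := hcomapRank (H.map π)
          rw [hcm, hHrank] at this
          omega
        refine ⟨⟨H.map π, hLrank, ?_⟩, ?_⟩
        · intro s hs hsY hsL
          have hsH : s ∈ H := by
            have : s ∈ (H.map π).comap π := hsL
            rwa [hcm] at this
          have : s ∈ (Y : Set (Fin k → F)) := by
            rw [← hHS]; exact ⟨hsH, by simpa using hs⟩
          exact hsY (by simpa using this)
        · apply Subtype.ext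
          simpa using hcm
    -- counting the lines
    set g : (Fin k → F) → Submodule F ((Fin k → F) ⧸ W) :=
      fun s => Submodule.span F {π s} with hg
    set ℒ : Set (Submodule F ((Fin k → F) ⧸ W)) := {L | finrank F L = 1} with hℒ
    set 𝒢 : Set (Submodule F ((Fin k → F) ⧸ W)) :=
      g '' ((S \ Y : Finset (Fin k → F)) : Set (Fin k → F)) with h𝒢
    have hsubFin : Finite (Submodule F ((Fin k → F) ⧸ W)) :=
      Finite.of_injective (fun L => (L : Set ((Fin k → F) ⧸ W))) SetLike.coe_injective
    have h𝒢ℒ : 𝒢 ⊆ ℒ := by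
      rintro _ ⟨s, hs, rfl⟩
      rw [Finset.mem_coe, Finset.mem_sdiff] at hs
      exact finrank_span_singleton (hπ0 s hs.1 hs.2)
    have hInj : Set.InjOn g ((S \ Y : Finset (Fin k → F)) : Set (Fin k → F)) := by
      intro s hs t ht hgst
      rw [Finset.mem_coe, Finset.mem_sdiff] at hs ht
      by_contra hst
      have h1 : π s ∈ Submodule.span F {π t} := by
        rw [show Submodule.span F {π t} = g t from rfl, ← hgst]
        exact Submodule.mem_span_singleton_self _
      have h2 : π t ∈ Submodule.span F {π t} := Submodule.mem_span_singleton_self _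
      have hH0rank : finrank F ((Submodule.span F {π t}).comap π) = k - 1 := by
        rw [hcomapRank, finrank_span_singleton (hπ0 t ht.1 ht.2)]
        omega
      refine hclaim2 s hs.1 t ht.1 hs.2 ht.2 hst _ hH0rank ?_ h1 h2
      intro y hy
      exact hWle _ (Submodule.subset_span hy)
    have e2 : {L : Submodule F ((Fin k → F) ⧸ W) //
          finrank F L = 1 ∧ ∀ s ∈ S, s ∉ Y → π s ∉ L} ≃ ↥(ℒ \ 𝒢) :=
      Equiv.subtypeEquivRight (fun L => by
        constructor
        · rintro ⟨h1, h2⟩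
          refine ⟨h1, ?_⟩
          rintro ⟨s, hs, rfl⟩
          rw [Finset.mem_coe, Finset.mem_sdiff] at hs
          exact h2 s hs.1 hs.2 (Submodule.mem_span_singleton_self _)
        · rintro ⟨h1, h2⟩
          refine ⟨h1, fun s hs hsY hmemL => h2 ?_⟩
          refine ⟨s, by simp [Finset.mem_sdiff, hs, hsY], ?_⟩
          exact Submodule.eq_of_le_of_finrank_eq
            (Submodule.span_le.mpr (by simpa using hmemL))
            (by rw [finrank_span_singleton (hπ0 s hs hsY)]; exact h1.symm))
    have hℒcard : ℒ.ncard = Fintype.card F + 1 := by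
      have h1 := aux_card_lines F ((Fin k → F) ⧸ W) hQrank
      rw [← Nat.card_coe_set_eq]
      rw [← h1]
      exact Nat.card_congr (Equiv.subtypeEquivRight fun _ => Iff.rfl)
    have h𝒢card : 𝒢.ncard = S.card - (k - 2) := by
      rw [h𝒢, Set.ncard_image_of_injOn hInj, Set.ncard_coe_finset,
        Finset.card_sdiff_of_subset hYS, hYcard]
    have hle : 𝒢.ncard ≤ ℒ.ncard := Set.ncard_le_ncard h𝒢ℒ (Set.toFinite _)
    have hYle : k - 2 ≤ S.card := by omega
    constructor
    · omega
    · rw [← Nat.card_congr (Equiv.ofBijective f hbij), Nat.card_congr e2,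
        Nat.card_coe_set_eq, Set.ncard_diff h𝒢ℒ, hℒcard, h𝒢card]
      omega
  obtain ⟨Y, hYS, hYcard⟩ := Finset.exists_subset_card_eq (show k - 2 ≤ S.card by omega)
  exact ⟨(key Y hYS hYcard).1, fun Y hYS hYcard => (key Y hYS hYcard).2⟩
end

section
/- Let D be a subset of S with |D| = k − 3 and let x, y, z be three distinct elements of S \ D. Then T_{{x} ∪ D}(y) · T_{{y} ∪ D}(z) · T_{{z} ∪ D}(x) = (−1)^{t+1} · T_{{x} ∪ D}(z) · T_{{y} ∪ D}(x) · T_{{z} ∪ D}(y). -/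
/-- `detCols L` is the determinant of the `k × k` matrix whose `j`-th column is the
`j`-th entry of the list `L` (lists of length ≠ `k` are padded with `0`). -/
def detCols {F : Type} [CommRing F] {k : ℕ} (L : List (Fin k → F)) : F :=
  Matrix.det (Matrix.of fun i j : Fin k => L.getD (j : ℕ) 0 i)

/-- The Segre product `P_D(A, B)` of the sequences `A = (a_1, …, a_n)` and
`B = (b_0, …, b_{n−1})` with base `D`, with respect to the family of tangent functions `T`:
`∏_{i=1}^n T_{D ∪ {a_1,…,a_{i−1},b_i,…,b_{n−1}}}(a_i) ·
  T_{D ∪ {a_1,…,a_{i−1},b_i,…,b_{n−1}}}(b_{i−1})⁻¹`. -/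
def segreP {F : Type} [Field F] [DecidableEq F] {k : ℕ}
    (T : Finset (Fin k → F) → (Fin k → F) → F)
    (D : Finset (Fin k → F)) (A B : List (Fin k → F)) : F :=
  ∏ j ∈ Finset.range A.length,
    (T (D ∪ (A.take j).toFinset ∪ (B.drop (j + 1)).toFinset) (A.getD j 0) *
      (T (D ∪ (A.take j).toFinset ∪ (B.drop (j + 1)).toFinset) (B.getD j 0))⁻¹)

/-- `T` is a family of tangent functions for `S` (with `t` tangent hyperplanes through
each subset of size `k − 2`): for every `Y ⊆ S` with `|Y| = k − 2` there is a set `Φ` of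
`t` pairwise linearly independent linear forms, each vanishing on `Y` and nonzero at every
vector of `S \ Y`, with `T Y = ∏_{α ∈ Φ} α`. -/
def IsTangentFamily {F : Type} [Field F] [DecidableEq F] {k : ℕ} (t : ℕ)
    (S : Finset (Fin k → F)) (T : Finset (Fin k → F) → (Fin k → F) → F) : Prop :=
  ∀ Y : Finset (Fin k → F), Y ⊆ S → Y.card = k - 2 →
    ∃ Φ : Finset ((Fin k → F) →ₗ[F] F),
      Φ.card = t ∧
      (∀ α ∈ Φ, ∀ β ∈ Φ, α ≠ β → ∀ c : F, α ≠ c • β) ∧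
      (∀ α ∈ Φ, ∀ y ∈ Y, α y = 0) ∧
      (∀ α ∈ Φ, ∀ s ∈ S, s ∉ Y → α s ≠ 0) ∧
      (∀ x, T Y x = ∏ α ∈ Φ, α x)

/-- The subsequence of `L` consisting of the entries whose positions lie in `s`,
in their original order (`d` is a default value). -/
def subseq {α : Type} (d : α) (L : List α) (s : Finset ℕ) : List α :=
  ((List.range L.length).filter (fun i => decide (i ∈ s))).map (fun i => L.getD i d)

/-- The subsequence of `L` consisting of the entries whose positions do not lie in `s`,
in their original order (`d` is a default value). -/
def subseqC {α : Type} (d : α) (L : List α) (s : Finset ℕ) : List α :=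
  ((List.range L.length).filter (fun i => decide (i ∉ s))).map (fun i => L.getD i d)

/-- The number of transpositions needed (counted as the number of inversions) to reorder a
list of length `len` so that the entries in positions `s` occupy the last `|s|` positions,
preserving the relative order of the two groups. -/
def invCount (s : Finset ℕ) (len : ℕ) : ℕ :=
  ((Finset.range len ×ˢ Finset.range len).filter
    (fun ij => ij.1 ∈ s ∧ ij.2 ∉ s ∧ ij.1 < ij.2)).card

set_option linter.unusedSectionVars false
set_option maxHeartbeats 800000
open Finset

section
variable {F : Type} [Field F] [DecidableEq F] {k : ℕ}

def dd (v : Fin k → (Fin k → F)) : F := Matrix.detRowAlternating v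

lemma dd_swap (v : Fin k → (Fin k → F)) (i j : Fin k) (hij : i ≠ j) :
    dd (v ∘ Equiv.swap i j) = - dd v := AlternatingMap.map_swap _ v hij

lemma dd_zero_of_eq (v : Fin k → (Fin k → F)) (i j : Fin k) (hv : v i = v j) (hij : i ≠ j) :
    dd v = 0 := AlternatingMap.map_eq_zero_of_eq _ v hv hij

def ddLast (m : Fin k → (Fin k → F)) (i : Fin k) : (Fin k → F) →ₗ[F] F where
  toFun w := dd (Function.update m i w)
  map_add' a b := AlternatingMap.map_update_add _ m i a b
  map_smul' c a := AlternatingMap.map_update_smul _ m i c a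

lemma dd_eq_det (v : Fin k → (Fin k → F)) : dd v = Matrix.det (Matrix.of v) := rfl

lemma dd_ne_zero {S : Finset (Fin k → F)}
    (harc : ∀ A ⊆ S, A.card = k →
      LinearIndependent F (fun v : {x // x ∈ A} => (v : Fin k → F)) ∧
      Submodule.span F (A : Set (Fin k → F)) = ⊤)
    (v : Fin k → (Fin k → F)) (hinj : Function.Injective v) (hS : ∀ j, v j ∈ S) :
    dd v ≠ 0 := by
  classical
  set A := Finset.image v Finset.univ with hA
  have hAS : A ⊆ S := by
    intro a ha
    simp only [hA, Finset.mem_image] at ha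
    obtain ⟨j, -, rfl⟩ := ha
    exact hS j
  have hAcard : A.card = k := by
    rw [hA, Finset.card_image_of_injective _ hinj, Finset.card_univ, Fintype.card_fin]
  obtain ⟨hli, -⟩ := harc A hAS hAcard
  have hli2 : LinearIndependent F v := by
    have h2 := hli.comp (fun j : Fin k => (⟨v j, by simp [hA]⟩ : {x // x ∈ A}))
      (fun i j hij => hinj (congrArg Subtype.val hij))
    exact h2
  have hu : IsUnit (Matrix.of v) := Matrix.linearIndependent_rows_iff_isUnit.mp hli2
  have hdet : IsUnit (Matrix.det (Matrix.of v)) := (Matrix.isUnit_iff_isUnit_det _).mp hu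
  rw [dd_eq_det]
  exact hdet.ne_zero


def fam3 (hk : 3 ≤ k) (L : List (Fin k → F)) (a b c : Fin k → F) : Fin k → (Fin k → F) :=
  Function.update (Function.update (Function.update (fun j => L.getD j 0)
    (⟨k-3, by omega⟩ : Fin k) a) (⟨k-2, by omega⟩ : Fin k) b) (⟨k-1, by omega⟩ : Fin k) c

lemma fam3_apply0 (hk : 3 ≤ k) (L : List (Fin k → F)) (a b c : Fin k → F) :
    fam3 hk L a b c ⟨k-3, by omega⟩ = a := by
  rw [fam3, Function.update_of_ne (by simp [Fin.ext_iff]; omega),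
    Function.update_of_ne (by simp [Fin.ext_iff]; omega), Function.update_self]

lemma fam3_apply1 (hk : 3 ≤ k) (L : List (Fin k → F)) (a b c : Fin k → F) :
    fam3 hk L a b c ⟨k-2, by omega⟩ = b := by
  rw [fam3, Function.update_of_ne (by simp [Fin.ext_iff]; omega), Function.update_self]

lemma fam3_apply2 (hk : 3 ≤ k) (L : List (Fin k → F)) (a b c : Fin k → F) :
    fam3 hk L a b c ⟨k-1, by omega⟩ = c := by
  rw [fam3, Function.update_self]

lemma fam3_apply_low (hk : 3 ≤ k) (L : List (Fin k → F)) (a b c : Fin k → F)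
    (j : Fin k) (h0 : j ≠ ⟨k-3, by omega⟩) (h1 : j ≠ ⟨k-2, by omega⟩) (h2 : j ≠ ⟨k-1, by omega⟩) :
    fam3 hk L a b c j = L.getD j 0 := by
  rw [fam3, Function.update_of_ne h2, Function.update_of_ne h1, Function.update_of_ne h0]

lemma fam3_classify (hk : 3 ≤ k) (D : Finset (Fin k → F)) (hDcard : D.card = k - 3)
    (a b c : Fin k → F) (j : Fin k) :
    (j = ⟨k-3, by omega⟩ ∧ fam3 hk D.toList a b c j = a) ∨
    (j = ⟨k-2, by omega⟩ ∧ fam3 hk D.toList a b c j = b) ∨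
    (j = ⟨k-1, by omega⟩ ∧ fam3 hk D.toList a b c j = c) ∨
    ((j : ℕ) < D.toList.length ∧ fam3 hk D.toList a b c j = D.toList.getD j 0 ∧
      fam3 hk D.toList a b c j ∈ D) := by
  have hlen : D.toList.length = k - 3 := by rw [Finset.length_toList, hDcard]
  by_cases h0 : j = (⟨k-3, by omega⟩ : Fin k)
  · exact Or.inl ⟨h0, h0 ▸ fam3_apply0 hk _ a b c⟩
  by_cases h1 : j = (⟨k-2, by omega⟩ : Fin k)
  · exact Or.inr (Or.inl ⟨h1, h1 ▸ fam3_apply1 hk _ a b c⟩)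
  by_cases h2 : j = (⟨k-1, by omega⟩ : Fin k)
  · exact Or.inr (Or.inr (Or.inl ⟨h2, h2 ▸ fam3_apply2 hk _ a b c⟩))
  have hj : (j : ℕ) < D.toList.length := by
    rw [hlen]
    have := j.isLt
    simp only [Fin.ext_iff] at h0 h1 h2
    omega
  refine Or.inr (Or.inr (Or.inr ⟨hj, fam3_apply_low hk _ a b c j h0 h1 h2, ?_⟩))
  rw [fam3_apply_low hk _ a b c j h0 h1 h2, List.getD_eq_getElem _ _ hj]
  exact Finset.mem_toList.mp (List.getElem_mem hj)

lemma fam3_update (hk : 3 ≤ k) (L : List (Fin k → F)) (a b c c' : Fin k → F) :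
    Function.update (fam3 hk L a b c) ⟨k-1, by omega⟩ c' = fam3 hk L a b c' := by
  simp [fam3, Function.update_idem]

lemma fam3_swap02 (hk : 3 ≤ k) (L : List (Fin k → F)) (a b c : Fin k → F) :
    fam3 hk L a b c ∘ Equiv.swap (⟨k-3, by omega⟩ : Fin k) ⟨k-1, by omega⟩ = fam3 hk L c b a := by
  funext j
  simp only [Function.comp_apply]
  by_cases h0 : j = (⟨k-3, by omega⟩ : Fin k)
  · subst h0; rw [Equiv.swap_apply_left, fam3_apply2, fam3_apply0]
  by_cases h2 : j = (⟨k-1, by omega⟩ : Fin k)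
  · subst h2; rw [Equiv.swap_apply_right, fam3_apply0, fam3_apply2]
  rw [Equiv.swap_apply_of_ne_of_ne h0 h2]
  by_cases h1 : j = (⟨k-2, by omega⟩ : Fin k)
  · subst h1; rw [fam3_apply1, fam3_apply1]
  · rw [fam3_apply_low hk L a b c j h0 h1 h2, fam3_apply_low hk L c b a j h0 h1 h2]

lemma fam3_inj (hk : 3 ≤ k) (D : Finset (Fin k → F)) (hDcard : D.card = k - 3)
    (a b c : Fin k → F) (haD : a ∉ D) (hbD : b ∉ D) (hcD : c ∉ D)
    (hab : a ≠ b) (hbc : b ≠ c) (hac : a ≠ c) :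
    Function.Injective (fam3 hk D.toList a b c) := by
  intro i j hij
  rcases fam3_classify hk D hDcard a b c i with ⟨hi, hvi⟩ | ⟨hi, hvi⟩ | ⟨hi, hvi⟩ | ⟨hi, hvi, hmi⟩ <;>
    rcases fam3_classify hk D hDcard a b c j with ⟨hj, hvj⟩ | ⟨hj, hvj⟩ | ⟨hj, hvj⟩ | ⟨hj, hvj, hmj⟩ <;>
    rw [hvi, hvj] at hij
  · rw [hi, hj]
  · exact absurd hij hab
  · exact absurd hij hac
  · exact absurd (hij ▸ (hvj ▸ hmj)) haD
  · exact absurd hij.symm hab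
  · rw [hi, hj]
  · exact absurd hij hbc
  · exact absurd (hij ▸ (hvj ▸ hmj)) hbD
  · exact absurd hij.symm hac
  · exact absurd hij.symm hbc
  · rw [hi, hj]
  · exact absurd (hij ▸ (hvj ▸ hmj)) hcD
  · exact absurd (hij.symm ▸ (hvi ▸ hmi)) haD
  · exact absurd (hij.symm ▸ (hvi ▸ hmi)) hbD
  · exact absurd (hij.symm ▸ (hvi ▸ hmi)) hcD
  · rw [List.getD_eq_getElem _ _ hi, List.getD_eq_getElem _ _ hj] at hij
    exact Fin.ext ((D.nodup_toList).getElem_inj_iff.mp hij)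

lemma wilson_prod [Fintype F] : ∏ x ∈ Finset.univ.erase (0:F), x = -1 := by
  classical
  have himg : Finset.univ.erase (0:F) = Finset.univ.image (fun u : Fˣ => (u : F)) := by
    ext a
    simp only [Finset.mem_erase, Finset.mem_univ, and_true, Finset.mem_image, true_and]
    constructor
    · intro ha
      obtain ⟨u, hu⟩ := IsUnit.exists_left_inv (isUnit_iff_ne_zero.mpr ha).unit.isUnit
      exact ⟨(isUnit_iff_ne_zero.mpr ha).unit, rfl⟩
    · rintro ⟨u, rfl⟩
      exact Units.ne_zero u
  rw [himg, Finset.prod_image (fun u _ v _ h => Units.ext h)]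
  have : (∏ u : Fˣ, u) = (-1 : Fˣ) := FiniteField.prod_univ_units_id_eq_neg_one
  calc ∏ u : Fˣ, (u : F) = ((∏ u : Fˣ, u : Fˣ) : F) := by
        rw [← Units.coeHom_apply, map_prod]; rfl
    _ = -1 := by rw [this]; simp

lemma form_eq_zero {S : Finset (Fin k → F)}
    (harc : ∀ A ⊆ S, A.card = k →
      LinearIndependent F (fun v : {x // x ∈ A} => (v : Fin k → F)) ∧
      Submodule.span F (A : Set (Fin k → F)) = ⊤)
    {E : Finset (Fin k → F)} (hES : E ⊆ S) (hEcard : E.card = k)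
    (γ : (Fin k → F) →ₗ[F] F) (hγ : ∀ v ∈ E, γ v = 0) : γ = 0 := by
  obtain ⟨-, hsp⟩ := harc E hES hEcard
  exact LinearMap.ext_on hsp (fun v hv => by rw [hγ v hv]; rfl)

lemma KL {q t : ℕ} [Fintype F] (hk : 3 ≤ k) (hF : Fintype.card F = q)
    (S : Finset (Fin k → F))
    (harc : ∀ A ⊆ S, A.card = k →
      LinearIndependent F (fun v : {x // x ∈ A} => (v : Fin k → F)) ∧
      Submodule.span F (A : Set (Fin k → F)) = ⊤)
    (ht : S.card + t = q + k - 1) (hSk : k ≤ S.card)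
    (T : Finset (Fin k → F) → (Fin k → F) → F) (hT : IsTangentFamily t S T)
    (D : Finset (Fin k → F)) (hD : D ⊆ S) (hDcard : D.card = k - 3)
    (x y z : Fin k → F) (hx : x ∈ S) (hy : y ∈ S) (hz : z ∈ S)
    (hxD : x ∉ D) (hyD : y ∉ D) (hzD : z ∉ D)
    (hxy : x ≠ y) (hyz : y ≠ z) (hxz : x ≠ z) :
    T (insert x D) y * ∏ s ∈ S \ insert x (insert y (insert z D)), dd (fam3 hk D.toList x s y)
      = - (T (insert x D) z *
        ∏ s ∈ S \ insert x (insert y (insert z D)), dd (fam3 hk D.toList x s z)) := by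
  classical
  set E := insert x (insert y (insert z D)) with hE
  have hES : E ⊆ S := by
    intro v hv
    simp only [hE, mem_insert] at hv
    rcases hv with rfl | rfl | rfl | hv
    · exact hx
    · exact hy
    · exact hz
    · exact hD hv
  have hEcard : E.card = k := by
    rw [hE, card_insert_of_notMem (by simp [mem_insert, hxy, hxz, hxD]),
      card_insert_of_notMem (by simp [mem_insert, hyz, hyD]),
      card_insert_of_notMem hzD, hDcard]
    omega
  set Y := insert x D with hY
  have hYS : Y ⊆ S := by
    intro v hv
    simp only [hY, mem_insert] at hv
    rcases hv with rfl | hv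
    · exact hx
    · exact hD hv
  have hYcard : Y.card = k - 2 := by
    rw [hY, card_insert_of_notMem hxD, hDcard]; omega
  obtain ⟨Φ, hΦc, hΦind, hΦv, hΦnz, hΦp⟩ := hT Y hYS hYcard
  set M := S \ E with hM
  have hMcard : M.card = S.card - k := by rw [hM, card_sdiff_of_subset hES, hEcard]
  have htm : t + M.card = q - 1 := by omega
  have hMs : ∀ s ∈ M, s ∈ S ∧ s ∉ D ∧ s ≠ x ∧ s ≠ y ∧ s ≠ z := by
    intro s hs
    rw [hM, mem_sdiff, hE] at hs
    simp only [mem_insert, not_or] at hs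
    tauto
  -- the secant linear forms
  set β : (Fin k → F) → ((Fin k → F) →ₗ[F] F) :=
    fun s => ddLast (fam3 hk D.toList x s 0) ⟨k-1, by omega⟩ with hβ
  have hβ_apply : ∀ s w, β s w = dd (fam3 hk D.toList x s w) := by
    intro s w
    show dd (Function.update (fam3 hk D.toList x s 0) ⟨k-1, by omega⟩ w) = _
    rw [fam3_update]
  -- membership of fam3 values in S
  have hmemS : ∀ a b c : Fin k → F, a ∈ S → b ∈ S → c ∈ S → ∀ j,
      fam3 hk D.toList a b c j ∈ S := by
    intro a b c ha hb hc j
    rcases fam3_classify hk D hDcard a b c j with ⟨-, hv⟩ | ⟨-, hv⟩ | ⟨-, hv⟩ | ⟨-, -, hm⟩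
    · rw [hv]; exact ha
    · rw [hv]; exact hb
    · rw [hv]; exact hc
    · exact hD hm
  have hddne : ∀ a b c : Fin k → F, a ∈ S → b ∈ S → c ∈ S → a ∉ D → b ∉ D → c ∉ D →
      a ≠ b → b ≠ c → a ≠ c → dd (fam3 hk D.toList a b c) ≠ 0 := by
    intro a b c ha hb hc haD hbD hcD hab hbc hac
    exact dd_ne_zero harc _ (fam3_inj hk D hDcard a b c haD hbD hcD hab hbc hac)
      (hmemS a b c ha hb hc)
  -- vanishing of β s
  have hβD : ∀ s, ∀ d ∈ D, β s d = 0 := by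
    intro s d hd
    rw [hβ_apply]
    obtain ⟨n, hn, hval⟩ := List.mem_iff_getElem.mp (Finset.mem_toList.mpr hd)
    have hlen : D.toList.length = k - 3 := by rw [Finset.length_toList, hDcard]
    have hnk : n < k - 3 := hlen ▸ hn
    refine dd_zero_of_eq _ ⟨n, by omega⟩ ⟨k-1, by omega⟩ ?_ (by simp [Fin.ext_iff]; omega)
    rw [fam3_apply2, fam3_apply_low hk _ x s d ⟨n, by omega⟩
      (by simp [Fin.ext_iff]; omega) (by simp [Fin.ext_iff]; omega) (by simp [Fin.ext_iff]; omega)]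
    rw [List.getD_eq_getElem _ _ (by simpa [hlen] using hnk)]
    exact hval
  have hβx : ∀ s, β s x = 0 := by
    intro s
    rw [hβ_apply]
    refine dd_zero_of_eq _ ⟨k-3, by omega⟩ ⟨k-1, by omega⟩ ?_ (by simp [Fin.ext_iff]; omega)
    rw [fam3_apply0, fam3_apply2]
  have hβself : ∀ s, β s s = 0 := by
    intro s
    rw [hβ_apply]
    refine dd_zero_of_eq _ ⟨k-2, by omega⟩ ⟨k-1, by omega⟩ ?_ (by simp [Fin.ext_iff]; omega)
    rw [fam3_apply1, fam3_apply2]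
  -- non-membership in Y
  have hyY : y ∉ Y := by simp [hY, mem_insert, Ne.symm hxy, hyD]
  have hzY : z ∉ Y := by simp [hY, mem_insert, Ne.symm hxz, hzD]
  have hsY : ∀ s ∈ M, s ∉ Y := by
    intro s hs
    obtain ⟨-, hsD, hsx, -, -⟩ := hMs s hs
    simp [hY, mem_insert, hsx, hsD]
  -- nonzero values
  have hαy : ∀ α ∈ Φ, α y ≠ 0 := fun α hα => hΦnz α hα y hy hyY
  have hαz : ∀ α ∈ Φ, α z ≠ 0 := fun α hα => hΦnz α hα z hz hzY
  have hβy : ∀ s ∈ M, β s y ≠ 0 := by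
    intro s hs
    obtain ⟨hsS, hsD, hsx, hsy, hsz⟩ := hMs s hs
    rw [hβ_apply]
    exact hddne x s y hx hsS hy hxD hsD hyD (Ne.symm hsx) hsy hxy
  have hβz : ∀ s ∈ M, β s z ≠ 0 := by
    intro s hs
    obtain ⟨hsS, hsD, hsx, hsy, hsz⟩ := hMs s hs
    rw [hβ_apply]
    exact hddne x s z hx hsS hz hxD hsD hzD (Ne.symm hsx) hsz hxz
  -- vanishing implies zero
  have hzero : ∀ γ : (Fin k → F) →ₗ[F] F, (∀ d ∈ D, γ d = 0) → γ x = 0 → γ y = 0 → γ z = 0 →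
      γ = 0 := by
    intro γ hd h1 h2 h3
    refine form_eq_zero harc hES hEcard γ ?_
    intro v hv
    simp only [hE, mem_insert] at hv
    rcases hv with rfl | rfl | rfl | hv
    · exact h1
    · exact h2
    · exact h3
    · exact hd v hv
  -- proportionality
  have hprop : ∀ (α α' : (Fin k → F) →ₗ[F] F), (∀ d ∈ D, α d = 0) → (∀ d ∈ D, α' d = 0) →
      α x = 0 → α' x = 0 → α z ≠ 0 → α' z ≠ 0 → α y / α z = α' y / α' z →
      α' = (α' z / α z) • α := by
    intro α α' hαd hα'd hαx hα'x hαz' hα'z' hr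
    have hcross : α y * α' z = α' y * α z := (div_eq_div_iff hαz' hα'z').mp hr
    have h0 : α' - (α' z / α z) • α = 0 := by
      refine hzero _ (fun d hd => ?_) ?_ ?_ ?_
      · simp [LinearMap.sub_apply, LinearMap.smul_apply, hαd d hd, hα'd d hd]
      · simp [LinearMap.sub_apply, LinearMap.smul_apply, hαx, hα'x]
      · simp only [LinearMap.sub_apply, LinearMap.smul_apply, smul_eq_mul]
        field_simp
        linear_combination -hcross
      · simp only [LinearMap.sub_apply, LinearMap.smul_apply, smul_eq_mul]
        field_simp
        ring
    exact sub_eq_zero.mp h0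
  -- ratio functions
  set r : ((Fin k → F) →ₗ[F] F) → F := fun α => α y / α z with hrdef
  set r' : (Fin k → F) → F := fun s => β s y / β s z with hr'def
  have hαD : ∀ α ∈ Φ, ∀ d ∈ D, α d = 0 := fun α hα d hd =>
    hΦv α hα d (by simp [hY, mem_insert, hd])
  have hαx : ∀ α ∈ Φ, α x = 0 := fun α hα => hΦv α hα x (by simp [hY, mem_insert])
  have hrinj : Set.InjOn r Φ := by
    intro α hα α' hα' hEq
    by_contra hne
    have hc := hprop α α' (hαD α (Finset.mem_coe.mp hα)) (hαD α' (Finset.mem_coe.mp hα'))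
      (hαx α (Finset.mem_coe.mp hα)) (hαx α' (Finset.mem_coe.mp hα'))
      (hαz α (Finset.mem_coe.mp hα)) (hαz α' (Finset.mem_coe.mp hα')) hEq
    exact hΦind α' (Finset.mem_coe.mp hα') α (Finset.mem_coe.mp hα) (Ne.symm hne) _ hc
  have hr'inj : Set.InjOn r' M := by
    intro s hs s' hs' hEq
    by_contra hne
    obtain ⟨hsS, hsD, hsx, hsy, hsz⟩ := hMs s (Finset.mem_coe.mp hs)
    obtain ⟨hs'S, hs'D, hs'x, hs'y, hs'z⟩ := hMs s' (Finset.mem_coe.mp hs')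
    have hc := hprop (β s) (β s') (hβD s) (hβD s') (hβx s) (hβx s')
      (hβz s (Finset.mem_coe.mp hs)) (hβz s' (Finset.mem_coe.mp hs')) hEq
    have hev := congrArg (fun γ : (Fin k → F) →ₗ[F] F => γ s) hc
    simp only [LinearMap.smul_apply, smul_eq_mul, hβself s, mul_zero] at hev
    rw [hβ_apply] at hev
    exact hddne x s' s hx hs'S hsS hxD hs'D hsD (Ne.symm hs'x) (Ne.symm hne) (Ne.symm hsx) hev
  have hdisj : ∀ α ∈ Φ, ∀ s ∈ M, r α ≠ r' s := by
    intro α hα s hs hEq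
    obtain ⟨hsS, hsD, hsx, hsy, hsz⟩ := hMs s hs
    have hc := hprop (β s) α (hβD s) (hαD α hα) (hβx s) (hαx α hα) (hβz s hs) (hαz α hα)
      hEq.symm
    have hev := congrArg (fun γ : (Fin k → F) →ₗ[F] F => γ s) hc
    simp only [LinearMap.smul_apply, smul_eq_mul, hβself s, mul_zero] at hev
    exact hΦnz α hα s hsS (hsY s hs) hev
  set G := Φ.image r with hG
  set H := M.image r' with hH
  have hGc : G.card = t := by rw [hG, Finset.card_image_of_injOn hrinj, hΦc]
  have hHc : H.card = M.card := by rw [hH, Finset.card_image_of_injOn hr'inj]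
  have hGH : Disjoint G H := by
    rw [Finset.disjoint_left]
    rintro v hvG hvH
    obtain ⟨α, hα, rfl⟩ := Finset.mem_image.mp hvG
    obtain ⟨s, hs, hvs⟩ := Finset.mem_image.mp hvH
    exact hdisj α hα s hs hvs.symm
  have hrne : ∀ α ∈ Φ, r α ≠ 0 := fun α hα => div_ne_zero (hαy α hα) (hαz α hα)
  have hr'ne : ∀ s ∈ M, r' s ≠ 0 := fun s hs => div_ne_zero (hβy s hs) (hβz s hs)
  have hsub : G ∪ H ⊆ Finset.univ.erase 0 := by
    intro v hv
    rw [Finset.mem_union] at hv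
    rw [Finset.mem_erase]
    refine ⟨?_, Finset.mem_univ v⟩
    rcases hv with hv | hv
    · obtain ⟨α, hα, rfl⟩ := Finset.mem_image.mp hv
      exact hrne α hα
    · obtain ⟨s, hs, rfl⟩ := Finset.mem_image.mp hv
      exact hr'ne s hs
  have hcard : (Finset.univ.erase (0:F)).card ≤ (G ∪ H).card := by
    rw [Finset.card_union_of_disjoint hGH, hGc, hHc,
      Finset.card_erase_of_mem (Finset.mem_univ 0), Finset.card_univ, hF]
    omega
  have huniv : G ∪ H = Finset.univ.erase 0 := Finset.eq_of_subset_of_card_le hsub hcard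
  have key : (∏ α ∈ Φ, r α) * (∏ s ∈ M, r' s) = -1 := by
    have e1 : ∏ v ∈ G, v = ∏ α ∈ Φ, r α :=
      Finset.prod_image (fun a ha b hb hab => hrinj (Finset.mem_coe.mpr ha)
        (Finset.mem_coe.mpr hb) hab)
    have e2 : ∏ v ∈ H, v = ∏ s ∈ M, r' s :=
      Finset.prod_image (fun a ha b hb hab => hr'inj (Finset.mem_coe.mpr ha)
        (Finset.mem_coe.mpr hb) hab)
    rw [← e1, ← e2, ← Finset.prod_union hGH, huniv, wilson_prod]
  have hPr : ∏ α ∈ Φ, r α = T Y y / T Y z := by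
    rw [hΦp y, hΦp z, ← Finset.prod_div_distrib]
  have hPr' : ∏ s ∈ M, r' s =
      (∏ s ∈ M, dd (fam3 hk D.toList x s y)) / (∏ s ∈ M, dd (fam3 hk D.toList x s z)) := by
    rw [← Finset.prod_div_distrib]
    exact Finset.prod_congr rfl fun s hs => by show (β s) y / (β s) z = _; rw [hβ_apply, hβ_apply]
  have hTyne : T Y y ≠ 0 := by rw [hΦp y]; exact Finset.prod_ne_zero_iff.mpr hαy
  have hTzne : T Y z ≠ 0 := by rw [hΦp z]; exact Finset.prod_ne_zero_iff.mpr hαz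
  have hPyne : (∏ s ∈ M, dd (fam3 hk D.toList x s y)) ≠ 0 :=
    Finset.prod_ne_zero_iff.mpr (fun s hs => by rw [← hβ_apply]; exact hβy s hs)
  have hPzne : (∏ s ∈ M, dd (fam3 hk D.toList x s z)) ≠ 0 :=
    Finset.prod_ne_zero_iff.mpr (fun s hs => by rw [← hβ_apply]; exact hβz s hs)
  rw [hPr, hPr'] at key
  field_simp at key
  linear_combination key
end

lemma prod_neg' {F : Type*} [Field F] {γ : Type*} (M : Finset γ) (f : γ → F) :
    ∏ s ∈ M, (-(f s)) = (-1 : F) ^ M.card * ∏ s ∈ M, f s := by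
  rw [Finset.prod_congr rfl (fun s _ => show -(f s) = (-1) * f s by ring),
    Finset.prod_mul_distrib, Finset.prod_const]

/-- Segre's lemma of tangents: for `D ⊆ S` with `|D| = k − 3` and distinct
`x, y, z ∈ S \ D`:
`T_{{x}∪D}(y) T_{{y}∪D}(z) T_{{z}∪D}(x) = (−1)^{t+1} T_{{x}∪D}(z) T_{{y}∪D}(x) T_{{z}∪D}(y)`. -/
theorem statement4 (p h k q t : ℕ) (hp : p.Prime) (hh : 1 ≤ h) (hq : q = p ^ h)
    (hk : 3 ≤ k)
    (F : Type) [Field F] [Fintype F] [DecidableEq F] (hF : Fintype.card F = q)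
    (S : Finset (Fin k → F))
    (harc : ∀ A ⊆ S, A.card = k →
      LinearIndependent F (fun v : {x // x ∈ A} => (v : Fin k → F)) ∧
      Submodule.span F (A : Set (Fin k → F)) = ⊤)
    (ht : S.card + t = q + k - 1) (ht1 : 1 ≤ t) (hSk : k ≤ S.card)
    (T : Finset (Fin k → F) → (Fin k → F) → F) (hT : IsTangentFamily t S T)
    (D : Finset (Fin k → F)) (hD : D ⊆ S) (hDcard : D.card = k - 3)
    (x y z : Fin k → F) (hx : x ∈ S) (hy : y ∈ S) (hz : z ∈ S)
    (hxD : x ∉ D) (hyD : y ∉ D) (hzD : z ∉ D)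
    (hxy : x ≠ y) (hyz : y ≠ z) (hxz : x ≠ z) :
    T (insert x D) y * T (insert y D) z * T (insert z D) x =
      (-1 : F) ^ (t + 1) * (T (insert x D) z * T (insert y D) x * T (insert z D) y) := by
  classical
  have hE1 : insert y (insert z (insert x D)) = insert x (insert y (insert z D)) := by
    ext v; simp only [Finset.mem_insert]; tauto
  have hE2 : insert z (insert x (insert y D)) = insert x (insert y (insert z D)) := by
    ext v; simp only [Finset.mem_insert]; tauto
  have K1 := KL hk hF S harc ht hSk T hT D hD hDcard x y z hx hy hz hxD hyD hzD hxy hyz hxz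
  have K2 := KL hk hF S harc ht hSk T hT D hD hDcard y z x hy hz hx hyD hzD hxD hyz
    (Ne.symm hxz) (Ne.symm hxy)
  have K3 := KL hk hF S harc ht hSk T hT D hD hDcard z x y hz hx hy hzD hxD hyD
    (Ne.symm hxz) hxy (Ne.symm hyz)
  rw [hE1] at K2
  rw [hE2] at K3
  set E := insert x (insert y (insert z D)) with hE
  set M := S \ E with hM
  set m := M.card with hm
  -- cardinalities
  have hES : E ⊆ S := by
    intro v hv
    simp only [hE, Finset.mem_insert] at hv
    rcases hv with rfl | rfl | rfl | hv
    · exact hx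
    · exact hy
    · exact hz
    · exact hD hv
  have hEcard : E.card = k := by
    rw [hE, Finset.card_insert_of_notMem (by simp [Finset.mem_insert, hxy, hxz, hxD]),
      Finset.card_insert_of_notMem (by simp [Finset.mem_insert, hyz, hyD]),
      Finset.card_insert_of_notMem hzD, hDcard]
    omega
  have hMcard : m = S.card - k := by rw [hm, hM, Finset.card_sdiff_of_subset hES, hEcard]
  have htm : t + m = q - 1 := by omega
  have hMs : ∀ s ∈ M, s ∈ S ∧ s ∉ D ∧ s ≠ x ∧ s ≠ y ∧ s ≠ z := by
    intro s hs
    rw [hM, Finset.mem_sdiff, hE] at hs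
    simp only [Finset.mem_insert, not_or] at hs
    tauto
  -- swap identity
  have swap_dd : ∀ a b c : Fin k → F,
      dd (fam3 hk D.toList c b a) = - dd (fam3 hk D.toList a b c) := by
    intro a b c
    rw [← fam3_swap02 hk D.toList a b c, dd_swap _ _ _ (by simp [Fin.ext_iff]; omega)]
  -- nonzero determinant products
  have hmemS : ∀ a b c : Fin k → F, a ∈ S → b ∈ S → c ∈ S → ∀ j,
      fam3 hk D.toList a b c j ∈ S := by
    intro a b c ha hb hc j
    rcases fam3_classify hk D hDcard a b c j with ⟨-, hv⟩ | ⟨-, hv⟩ | ⟨-, hv⟩ | ⟨-, -, hmm⟩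
    · rw [hv]; exact ha
    · rw [hv]; exact hb
    · rw [hv]; exact hc
    · exact hD hmm
  have hddne : ∀ a b c : Fin k → F, a ∈ S → b ∈ S → c ∈ S → a ∉ D → b ∉ D → c ∉ D →
      a ≠ b → b ≠ c → a ≠ c → dd (fam3 hk D.toList a b c) ≠ 0 := by
    intro a b c ha hb hc haD hbD hcD hab hbc hac
    exact dd_ne_zero harc _ (fam3_inj hk D hDcard a b c haD hbD hcD hab hbc hac)
      (hmemS a b c ha hb hc)
  set P1 := ∏ s ∈ M, dd (fam3 hk D.toList x s y) with hP1
  set P3 := ∏ s ∈ M, dd (fam3 hk D.toList y s z) with hP3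
  set P5 := ∏ s ∈ M, dd (fam3 hk D.toList z s x) with hP5
  have hP1ne : P1 ≠ 0 := Finset.prod_ne_zero_iff.mpr (fun s hs => by
    obtain ⟨hsS, hsD, hsx, hsy, hsz⟩ := hMs s hs
    exact hddne x s y hx hsS hy hxD hsD hyD (Ne.symm hsx) hsy hxy)
  have hP3ne : P3 ≠ 0 := Finset.prod_ne_zero_iff.mpr (fun s hs => by
    obtain ⟨hsS, hsD, hsx, hsy, hsz⟩ := hMs s hs
    exact hddne y s z hy hsS hz hyD hsD hzD (Ne.symm hsy) hsz hyz)
  have hP5ne : P5 ≠ 0 := Finset.prod_ne_zero_iff.mpr (fun s hs => by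
    obtain ⟨hsS, hsD, hsx, hsy, hsz⟩ := hMs s hs
    exact hddne z s x hz hsS hx hzD hsD hxD (Ne.symm hsz) hsx (Ne.symm hxz))
  -- rewrite the "mirrored" products
  have hP2 : ∏ s ∈ M, dd (fam3 hk D.toList x s z) = (-1 : F) ^ m * P5 := by
    rw [Finset.prod_congr rfl (fun s _ => swap_dd z s x), prod_neg']
  have hP4 : ∏ s ∈ M, dd (fam3 hk D.toList y s x) = (-1 : F) ^ m * P1 := by
    rw [Finset.prod_congr rfl (fun s _ => swap_dd x s y), prod_neg']
  have hP6 : ∏ s ∈ M, dd (fam3 hk D.toList z s y) = (-1 : F) ^ m * P3 := by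
    rw [Finset.prod_congr rfl (fun s _ => swap_dd y s z), prod_neg']
  rw [hP2] at K1
  rw [hP4] at K2
  rw [hP6] at K3
  have hsq : ((-1 : F) ^ m) * ((-1 : F) ^ m) = 1 := by
    rw [← pow_add, ← two_mul, pow_mul, neg_one_sq, one_pow]
  have hmain : (T (insert x D) y * T (insert y D) z * T (insert z D) x) * (P1 * P3 * P5) =
      ((-1 : F) ^ (m + 1) * (T (insert x D) z * T (insert y D) x * T (insert z D) y)) *
        (P1 * P3 * P5) := by
    calc (T (insert x D) y * T (insert y D) z * T (insert z D) x) * (P1 * P3 * P5)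
        = (T (insert x D) y * P1) * ((T (insert y D) z * P3) * (T (insert z D) x * P5)) := by
          ring
      _ = (-(T (insert x D) z * ((-1 : F) ^ m * P5))) *
            ((-(T (insert y D) x * ((-1 : F) ^ m * P1))) *
              (-(T (insert z D) y * ((-1 : F) ^ m * P3)))) := by rw [K1, K2, K3]
      _ = (((-1 : F) ^ m) * ((-1 : F) ^ m)) * (((-1 : F) ^ m * (-1)) *
            (T (insert x D) z * T (insert y D) x * T (insert z D) y) * (P1 * P3 * P5)) := by
          ring
      _ = ((-1 : F) ^ (m + 1) * (T (insert x D) z * T (insert y D) x * T (insert z D) y)) *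
            (P1 * P3 * P5) := by rw [hsq, pow_succ]; ring
  have hQne : P1 * P3 * P5 ≠ 0 := mul_ne_zero (mul_ne_zero hP1ne hP3ne) hP5ne
  have hfin := mul_right_cancel₀ hQne hmain
  rw [hfin]
  -- sign
  have hsign : (-1 : F) ^ (m + 1) = (-1 : F) ^ (t + 1) := by
    rcases hp.eq_two_or_odd' with hp2 | hpodd
    · have hcast : ((Fintype.card F : ℕ) : F) = 0 := FiniteField.cast_card_eq_zero F
      rw [hF, hq, hp2] at hcast
      push_cast at hcast
      have h2 : (2 : F) = 0 := by
        have := pow_eq_zero_iff (n := h) (by omega) |>.mp hcast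
        exact this
      have hneg : (-1 : F) = 1 := by linear_combination -h2
      rw [hneg, one_pow, one_pow]
    · have hqodd : Odd q := hq ▸ hpodd.pow
      have hq2 : (q - 1) % 2 = 0 := by
        obtain ⟨r, hr⟩ := hqodd
        omega
      rcases Nat.even_or_odd (m + 1) with he | ho
      · have he2 : Even (t + 1) := Nat.even_iff.mpr (by
          have := Nat.even_iff.mp he
          omega)
        rw [he.neg_one_pow, he2.neg_one_pow]
      · have ho2 : Odd (t + 1) := Nat.odd_iff.mpr (by
          have := Nat.odd_iff.mp ho
          omega)
        rw [ho.neg_one_pow, ho2.neg_one_pow]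
  rw [hsign]
end

section
/- Assume |S| ≥ k + t. Let Y be an ordered subset of S of size k − 2 and E a subset of S of size t + 2 with Y ∩ E = ∅. Then 0 = ∑_{a ∈ E} T_Y(a) · ∏_{z ∈ E \ {a}} det(z, a, Y)^{−1}. -/
lemma key_aux {F : Type} [Field F] {V : Type} [DecidableEq V] (D : V → V → F)
    (hanti : ∀ x y, D x y = - D y x) (hzero : ∀ x, D x x = 0)
    (G : V → F) (E : Finset V) {w : V} (hw : w ∈ E)
    (hD0 : ∀ x ∈ E, ∀ y ∈ E, x ≠ y → D x y ≠ 0) :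
    ∑ a ∈ E, D a w * G a * ∏ z ∈ E.erase a, (D z a)⁻¹ =
      - ∑ a ∈ E.erase w, G a * ∏ z ∈ (E.erase w).erase a, (D z a)⁻¹ := by
  rw [← Finset.add_sum_erase _ _ hw, hzero w, zero_mul, zero_mul, zero_add,
    ← Finset.sum_neg_distrib]
  refine Finset.sum_congr rfl fun a ha => ?_
  obtain ⟨haw, haE⟩ := Finset.mem_erase.mp ha
  have hwa : w ∈ E.erase a := Finset.mem_erase.mpr ⟨haw.symm, hw⟩
  have hDwa : D w a ≠ 0 := hD0 w hw a haE haw.symm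
  rw [hanti a w, ← Finset.mul_prod_erase _ _ hwa, Finset.erase_right_comm]
  have hfact : ∀ (d g P : F), d ≠ 0 → -d * g * (d⁻¹ * P) = -(g * P) := by
    intro d g P hd; field_simp
  exact hfact _ _ _ hDwa

lemma key {F : Type} [Field F] {V : Type} [DecidableEq V] (D : V → V → F)
    (hanti : ∀ x y, D x y = - D y x) (hzero : ∀ x, D x x = 0) :
    ∀ (L : List (V → F)) (E : Finset V), E.card = L.length + 2 →
    (∀ x ∈ E, ∀ y ∈ E, x ≠ y → D x y ≠ 0) →
    (∀ α ∈ L, ∀ x v w : V, α x * D v w = α v * D x w - α w * D x v) →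
    ∑ a ∈ E, (L.map (fun α => α a)).prod * ∏ z ∈ E.erase a, (D z a)⁻¹ = 0 := by
  intro L
  induction L with
  | nil =>
    intro E hcard hD0 _
    obtain ⟨x, y, hxy, rfl⟩ := Finset.card_eq_two.mp hcard
    have hyx : y ≠ x := hxy.symm
    rw [Finset.sum_pair hxy]
    have h1 : ({x, y} : Finset V).erase x = {y} := by
      rw [Finset.erase_insert (by simp [hxy])]
    have h2 : ({x, y} : Finset V).erase y = {x} := by
      rw [Finset.pair_comm, Finset.erase_insert (by simp [hyx])]
    rw [h1, h2]
    simp only [List.map_nil, List.prod_nil, one_mul, Finset.prod_singleton]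
    rw [hanti y x]
    have hxy0 : D x y ≠ 0 := hD0 x (by simp) y (by simp) hxy
    field_simp
    ring
  | cons α L' IH =>
    intro E hcard hD0 hlin
    simp only [List.length_cons] at hcard
    have hcard2 : 1 < E.card := by omega
    obtain ⟨v, hv, w, hw, hvw⟩ := Finset.one_lt_card.mp hcard2
    have hDvw : D v w ≠ 0 := hD0 v hv w hw hvw
    have hα := hlin α List.mem_cons_self
    set G : V → F := fun a => (L'.map (fun β => β a)).prod with hG
    have hrw : ∀ a ∈ E, (List.map (fun β => β a) (α :: L')).prod *
        ∏ z ∈ E.erase a, (D z a)⁻¹ =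
        (D v w)⁻¹ * (α v * (D a w * G a * ∏ z ∈ E.erase a, (D z a)⁻¹)
          - α w * (D a v * G a * ∏ z ∈ E.erase a, (D z a)⁻¹)) := by
      intro a _
      have h1 : α a * D v w = α v * D a w - α w * D a v := hα a v w
      have h2 : α a = (α v * D a w - α w * D a v) * (D v w)⁻¹ := by
        rw [← h1, mul_assoc, mul_inv_cancel₀ hDvw, mul_one]
      simp only [List.map_cons, List.prod_cons]
      rw [h2]
      ring
    rw [Finset.sum_congr rfl hrw]
    have hIH : ∀ u ∈ E, ∑ a ∈ E, D a u * G a * ∏ z ∈ E.erase a, (D z a)⁻¹ = 0 := by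
      intro u hu
      rw [key_aux D hanti hzero G E hu hD0]
      rw [IH (E.erase u) (by rw [Finset.card_erase_of_mem hu]; omega)
        (fun x hx y hy => hD0 x (Finset.mem_of_mem_erase hx) y (Finset.mem_of_mem_erase hy))
        (fun β hβ => hlin β (List.mem_cons_of_mem α hβ))]
      ring
    rw [← Finset.mul_sum, Finset.sum_sub_distrib, ← Finset.mul_sum, ← Finset.mul_sum,
      hIH w hw, hIH v hv]
    ring


lemma detCols_swap {F : Type} [CommRing F] {m : ℕ} (x y : Fin (m+3) → F)
    (L : List (Fin (m+3) → F)) :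
    detCols (x :: y :: L) = - detCols (y :: x :: L) := by
  have h01 : (0 : Fin (m+3)) ≠ 1 := by simp [Fin.ext_iff]
  have hM : (Matrix.of fun i j : Fin (m+3) => (x :: y :: L).getD (j : ℕ) 0 i) =
      (Matrix.of fun i j : Fin (m+3) => (y :: x :: L).getD (j : ℕ) 0 i).submatrix
        id (Equiv.swap 0 1) := by
    ext i j
    simp only [Matrix.submatrix_apply, Matrix.of_apply, id_eq]
    rcases j with ⟨jv, hj⟩
    match jv, hj with
    | 0, hj => simp [show (⟨0, hj⟩ : Fin (m+3)) = 0 from rfl, Equiv.swap_apply_left]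
    | 1, hj => simp [show (⟨1, hj⟩ : Fin (m+3)) = 1 from rfl, Equiv.swap_apply_right]
    | (n+2), hj =>
      rw [Equiv.swap_apply_of_ne_of_ne (by simp [Fin.ext_iff]) (by simp [Fin.ext_iff])]
      simp [List.getD_cons_succ]
  rw [detCols, detCols, hM, Matrix.det_permute', Equiv.Perm.sign_swap h01]
  simp

lemma detCols_self {F : Type} [CommRing F] {m : ℕ} (x : Fin (m+3) → F)
    (L : List (Fin (m+3) → F)) :
    detCols (x :: x :: L) = 0 := by
  have h01 : (0 : Fin (m+3)) ≠ 1 := by simp [Fin.ext_iff]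
  exact Matrix.det_zero_of_column_eq h01 (fun i => rfl)

lemma detCols_ne_zero {F : Type} [Field F] [DecidableEq F] {m : ℕ} (L : List (Fin (m+3) → F))
    (hlen : L.length = m + 3) (hnd : L.Nodup)
    (hli : LinearIndependent F (fun v : {x // x ∈ L.toFinset} => (v : Fin (m+3) → F))) :
    detCols L ≠ 0 := by
  set A : Matrix (Fin (m+3)) (Fin (m+3)) F :=
    Matrix.of fun i j : Fin (m+3) => L.getD (j : ℕ) 0 i with hA
  have hjlt : ∀ j : Fin (m+3), (j : ℕ) < L.length := fun j => by
    have := j.isLt; omega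
  have hmem : ∀ j : Fin (m+3), L.getD (j : ℕ) 0 ∈ L.toFinset := fun j => by
    rw [List.mem_toFinset, List.getD_eq_getElem L 0 (hjlt j)]
    exact L.getElem_mem _
  set f : Fin (m+3) → {x // x ∈ L.toFinset} := fun j => ⟨L.getD (j : ℕ) 0, hmem j⟩ with hf
  have hfinj : Function.Injective f := by
    intro j j' hjj
    have hg : L.get ⟨(j : ℕ), hjlt j⟩ = L.get ⟨(j' : ℕ), hjlt j'⟩ := by
      have h2 := congrArg Subtype.val hjj
      simp only [hf] at h2
      rw [List.getD_eq_getElem L 0 (hjlt j), List.getD_eq_getElem L 0 (hjlt j')] at h2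
      simpa [List.get_eq_getElem] using h2
    have := (List.nodup_iff_injective_get.mp hnd) hg
    exact Fin.ext (by simpa [Fin.ext_iff] using this)
  have hcols : LinearIndependent F (fun j : Fin (m+3) => A.transpose j) := hli.comp f hfinj
  have hunit : IsUnit A := Matrix.linearIndependent_cols_iff_isUnit.mp hcols
  have : IsUnit A.det := (Matrix.isUnit_iff_isUnit_det A).mp hunit
  exact this.ne_zero

lemma succAbove_val {n : ℕ} (p : Fin (n+1)) (j : Fin n) :
    ((p.succAbove j : Fin (n+1)) : ℕ) = if (j:ℕ) < (p:ℕ) then (j:ℕ) else (j:ℕ)+1 := by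
  rcases lt_or_ge ((j:ℕ)) ((p:ℕ)) with hlt | hge
  · rw [Fin.succAbove_of_castSucc_lt _ _ (by simp [Fin.lt_def, hlt])]
    simp [hlt]
  · rw [Fin.succAbove_of_le_castSucc _ _ (by simp [Fin.le_def, hge])]
    simp [Nat.not_lt.mpr hge]

lemma detCols_lin {F : Type} [Field F] {m : ℕ} (Y : List (Fin (m+3) → F))
    (hYlen : Y.length = m + 1) (α : (Fin (m+3) → F) →ₗ[F] F)
    (hY : ∀ y ∈ Y, α y = 0) (x v w : Fin (m+3) → F) :
    α x * detCols (v::w::Y) = α v * detCols (x::w::Y) - α w * detCols (x::v::Y) := by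
  set C : List (Fin (m+3) → F) := x :: v :: w :: Y with hC
  set N : Matrix (Fin (m+4)) (Fin (m+4)) F :=
    Matrix.of (fun i j => Fin.cases (α (C.getD (j:ℕ) 0)) (fun i' => C.getD (j:ℕ) 0 i') i)
    with hN
  set c : Fin (m+4) → F :=
    Fin.cases 0 (fun i' => α (fun j => if i' = j then (1:F) else 0)) with hc
  have hrow0 : ∀ jj : Fin (m+4), N 0 jj = ∑ kk : Fin (m+4), c kk • N kk jj := by
    intro jj
    rw [Fin.sum_univ_succ]
    simp only [hc, hN, Fin.cases_zero, Fin.cases_succ, Matrix.of_apply]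
    rw [zero_smul, zero_add]
    have hu : α (C.getD (jj:ℕ) 0) =
        ∑ i' : Fin (m+3), (C.getD (jj:ℕ) 0) i' * α (fun j => if i' = j then (1:F) else 0) := by
      conv_lhs => rw [pi_eq_sum_univ (C.getD (jj:ℕ) 0)]
      rw [map_sum]
      refine Finset.sum_congr rfl fun i' _ => ?_
      rw [map_smul, smul_eq_mul]
    rw [hu]
    refine Finset.sum_congr rfl fun i' _ => ?_
    rw [smul_eq_mul]; ring
  have hdet0 : N.det = 0 := by
    have hNe : N = N.updateRow 0 (∑ kk, c kk • N kk) := by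
      ext i jj
      rcases Fin.eq_zero_or_eq_succ i with rfl | ⟨i', rfl⟩
      · rw [Matrix.updateRow_self, hrow0 jj]
        simp [Finset.sum_apply]
      · rw [Matrix.updateRow_ne (Fin.succ_ne_zero i')]
    have h2 : (N.updateRow 0 (∑ kk, c kk • N kk)).det = c 0 • N.det :=
      Matrix.det_updateRow_sum N 0 c
    rw [← hNe] at h2
    simpa [hc] using h2
  have hexp := Matrix.det_succ_row_zero N
  rw [hdet0] at hexp
  have h01 : (0 : Fin (m+4)) ≠ 1 := by simp [Fin.ext_iff]
  have h02 : (0 : Fin (m+4)) ≠ 2 := by simp [Fin.ext_iff, Nat.mod_eq_of_lt (show 2 < m+4 by omega)]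
  have h12 : (1 : Fin (m+4)) ≠ 2 := by simp [Fin.ext_iff, Nat.mod_eq_of_lt (show 2 < m+4 by omega)]
  have hsub : ∑ j : Fin (m+4), (-1:F)^(j:ℕ) * N 0 j * (N.submatrix Fin.succ j.succAbove).det =
      ∑ j ∈ ({0,1,2} : Finset (Fin (m+4))),
        (-1:F)^(j:ℕ) * N 0 j * (N.submatrix Fin.succ j.succAbove).det := by
    refine (Finset.sum_subset (Finset.subset_univ _) ?_).symm
    intro j _ hj
    simp only [Finset.mem_insert, Finset.mem_singleton, not_or] at hj
    obtain ⟨hj0, hj1, hj2⟩ := hj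
    have hval : 3 ≤ (j : ℕ) := by
      rcases Nat.lt_or_ge (j : ℕ) 3 with hlt | hge
      · exfalso
        interval_cases hjv : (j : ℕ)
        · exact hj0 (by simp [Fin.ext_iff, hjv])
        · exact hj1 (by simp [Fin.ext_iff, hjv])
        · exact hj2 (by simp [Fin.ext_iff, hjv, Nat.mod_eq_of_lt (show 2 < m+4 by omega)])
      · exact hge
    obtain ⟨n, hn⟩ : ∃ n, (j : ℕ) = n + 3 := ⟨(j : ℕ) - 3, by omega⟩
    have hN0j : N 0 j = 0 := by
      simp only [hN, Matrix.of_apply, Fin.cases_zero]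
      have hCn : C.getD (j : ℕ) 0 = Y.getD n 0 := by
        rw [hC, hn]
        simp [List.getD_cons_succ]
      rw [hCn]
      have hnlt : n < Y.length := by
        have := j.isLt; omega
      rw [List.getD_eq_getElem Y 0 hnlt]
      exact hY _ (Y.getElem_mem hnlt)
    rw [hN0j]; ring
  rw [hsub] at hexp
  rw [Finset.sum_insert (by simp [Fin.ext_iff, Nat.mod_eq_of_lt (show 2 < m+4 by omega)]), Finset.sum_insert (by simp [Fin.ext_iff, Nat.mod_eq_of_lt (show 2 < m+4 by omega)]),
    Finset.sum_singleton] at hexp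
  have hN00 : N 0 (0 : Fin (m+4)) = α x := by
    simp only [hN, Matrix.of_apply, Fin.cases_zero, Fin.val_zero]
    rw [hC]; rfl
  have hN01 : N 0 (1 : Fin (m+4)) = α v := by
    simp only [hN, Matrix.of_apply, Fin.cases_zero, Fin.val_one]
    rw [hC]; rfl
  have hN02 : N 0 (2 : Fin (m+4)) = α w := by
    simp only [hN, Matrix.of_apply, Fin.cases_zero, Fin.val_two]
    rw [hC]; rfl
  have hm0 : (N.submatrix Fin.succ ((0 : Fin (m+4)).succAbove)).det = detCols (v::w::Y) := by
    have he : N.submatrix Fin.succ ((0 : Fin (m+4)).succAbove) =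
        Matrix.of (fun i j : Fin (m+3) => (v::w::Y).getD (j:ℕ) 0 i) := by
      ext i j
      simp only [Matrix.submatrix_apply, hN, Matrix.of_apply, Fin.cases_succ]
      rw [succAbove_val, Fin.val_zero, if_neg (Nat.not_lt_zero _), hC, List.getD_cons_succ]
    rw [he]; rfl
  have hm1 : (N.submatrix Fin.succ ((1 : Fin (m+4)).succAbove)).det = detCols (x::w::Y) := by
    have he : N.submatrix Fin.succ ((1 : Fin (m+4)).succAbove) =
        Matrix.of (fun i j : Fin (m+3) => (x::w::Y).getD (j:ℕ) 0 i) := by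
      ext i j
      simp only [Matrix.submatrix_apply, hN, Matrix.of_apply, Fin.cases_succ]
      rw [succAbove_val, Fin.val_one, hC]
      rcases j with ⟨jv, hj⟩
      match jv, hj with
      | 0, hj => simp
      | (n+1), hj =>
        rw [if_neg (by simp)]
        simp [List.getD_cons_succ]
    rw [he]; rfl
  have hm2 : (N.submatrix Fin.succ ((2 : Fin (m+4)).succAbove)).det = detCols (x::v::Y) := by
    have he : N.submatrix Fin.succ ((2 : Fin (m+4)).succAbove) =
        Matrix.of (fun i j : Fin (m+3) => (x::v::Y).getD (j:ℕ) 0 i) := by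
      ext i j
      simp only [Matrix.submatrix_apply, hN, Matrix.of_apply, Fin.cases_succ]
      rw [succAbove_val, Fin.val_two, hC]
      rcases j with ⟨jv, hj⟩
      match jv, hj with
      | 0, hj => simp
      | 1, hj => simp
      | (n+2), hj =>
        rw [if_neg (by simp)]
        simp [List.getD_cons_succ]
    rw [he]; rfl
  rw [hN00, hN01, hN02, hm0, hm1, hm2, Fin.val_zero, Fin.val_one, Fin.val_two] at hexp
  norm_num at hexp
  linear_combination -hexp

/-- interpolation of the tangent function: if `|S| ≥ k + t`, `Y` is an
ordered subset of `S` of size `k − 2` and `E ⊆ S` has size `t + 2` with `Y ∩ E = ∅`, then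
`0 = ∑_{a ∈ E} T_Y(a) ∏_{z ∈ E \ {a}} det(z, a, Y)⁻¹`. -/
theorem statement5 (p h k q t : ℕ) (hp : p.Prime) (hh : 1 ≤ h) (hq : q = p ^ h)
    (hk : 3 ≤ k)
    (F : Type) [Field F] [Fintype F] [DecidableEq F] (hF : Fintype.card F = q)
    (S : Finset (Fin k → F))
    (harc : ∀ A ⊆ S, A.card = k →
      LinearIndependent F (fun v : {x // x ∈ A} => (v : Fin k → F)) ∧
      Submodule.span F (A : Set (Fin k → F)) = ⊤)
    (ht : S.card + t = q + k - 1) (ht1 : 1 ≤ t) (hSk : k ≤ S.card)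
    (T : Finset (Fin k → F) → (Fin k → F) → F) (hT : IsTangentFamily t S T)
    (hSkt : k + t ≤ S.card)
    (Y : List (Fin k → F)) (hYnd : Y.Nodup) (hYS : ∀ v ∈ Y, v ∈ S)
    (hYlen : Y.length = k - 2)
    (E : Finset (Fin k → F)) (hES : E ⊆ S) (hEcard : E.card = t + 2)
    (hYE : ∀ v ∈ Y, v ∉ E) :
    0 = ∑ a ∈ E, T Y.toFinset a * ∏ z ∈ E.erase a, (detCols (z :: a :: Y))⁻¹ := by
  obtain ⟨m, rfl⟩ : ∃ m, k = m + 3 := ⟨k - 3, by omega⟩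
  have hYlen' : Y.length = m + 1 := by omega
  have hYsub : Y.toFinset ⊆ S := fun v hv => hYS v (List.mem_toFinset.mp hv)
  have hYcard : Y.toFinset.card = (m + 3) - 2 := by
    rw [List.toFinset_card_of_nodup hYnd]; omega
  obtain ⟨Φ, hΦcard, -, hvanish, -, hTeq⟩ := hT Y.toFinset hYsub hYcard
  set D : (Fin (m+3) → F) → (Fin (m+3) → F) → F := fun z a => detCols (z :: a :: Y) with hD
  set L : List ((Fin (m+3) → F) → F) := Φ.toList.map (fun φ x => φ x) with hL
  have hanti : ∀ x y, D x y = - D y x := fun x y => detCols_swap x y Y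
  have hzero : ∀ x, D x x = 0 := fun x => detCols_self x Y
  have hD0 : ∀ x ∈ E, ∀ y ∈ E, x ≠ y → D x y ≠ 0 := by
    intro z hz a ha hza
    have hzY : z ∉ Y := fun hmem => hYE z hmem hz
    have haY : a ∉ Y := fun hmem => hYE a hmem ha
    have hnd : (z :: a :: Y).Nodup := by
      refine List.nodup_cons.mpr ⟨?_, List.nodup_cons.mpr ⟨haY, hYnd⟩⟩
      simp only [List.mem_cons]
      rintro (rfl | hmem)
      · exact hza rfl
      · exact hzY hmem
    have hlen : (z :: a :: Y).length = m + 3 := by simp [hYlen']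
    have hsub : (z :: a :: Y).toFinset ⊆ S := by
      intro u hu
      rcases List.mem_cons.mp (List.mem_toFinset.mp hu) with rfl | hu2
      · exact hES hz
      rcases List.mem_cons.mp hu2 with rfl | hu3
      · exact hES ha
      · exact hYS u hu3
    have hcardA : (z :: a :: Y).toFinset.card = m + 3 := by
      rw [List.toFinset_card_of_nodup hnd, hlen]
    exact detCols_ne_zero (z :: a :: Y) hlen hnd (harc _ hsub hcardA).1
  have hlin : ∀ β ∈ L, ∀ x v w, β x * D v w = β v * D x w - β w * D x v := by
    intro β hβ x v w
    obtain ⟨φ, hφ, rfl⟩ := List.mem_map.mp hβ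
    exact detCols_lin Y hYlen' φ
      (fun y hy => hvanish φ (Finset.mem_toList.mp hφ) y (List.mem_toFinset.mpr hy)) x v w
  have hcardE : E.card = L.length + 2 := by
    rw [hEcard, hL, List.length_map, Finset.length_toList, hΦcard]
  have hkey := key D hanti hzero L E hcardE hD0 hlin
  have hterm : ∀ a ∈ E, T Y.toFinset a * ∏ z ∈ E.erase a, (detCols (z :: a :: Y))⁻¹ =
      (L.map (fun β => β a)).prod * ∏ z ∈ E.erase a, (D z a)⁻¹ := by
    intro a _
    congr 1
    rw [hTeq a, hL, List.map_map, ← Finset.prod_map_toList]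
    rfl
  rw [Finset.sum_congr rfl hterm]
  exact hkey.symm
end

section
/- Let A = (a_1, …, a_n) and B = (b_0, …, b_{n−1}) be sequences of elements of S and D ⊆ S of size k − n − 1, with A, B, D pairwise disjoint, and let B* be obtained from B by interchanging two of its entries. Then P_D(A, B*) = (−1)^{t+1} P_D(A, B). -/
section SegreAux
open Finset

lemma prod_ne_zero_eq_neg_one (F : Type) [Field F] [Fintype F] [DecidableEq F] :
    ∏ x ∈ Finset.univ.erase (0 : F), x = -1 := by
  have himg : Finset.univ.erase (0 : F) = Finset.univ.image (Units.val : Fˣ → F) := by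
    ext x
    simp only [mem_erase, mem_univ, and_true, mem_image, true_and]
    constructor
    · intro hx; exact ⟨Units.mk0 x hx, rfl⟩
    · rintro ⟨u, rfl⟩; exact u.ne_zero
  rw [himg, Finset.prod_image (fun x _ y _ h => Units.ext h)]
  have h2 := FiniteField.prod_univ_units_id_eq_neg_one (K := F)
  calc ∏ u : Fˣ, (u : F) = ((∏ u : Fˣ, u : Fˣ) : F) := by
        rw [← Units.coeHom_apply, map_prod]; rfl
    _ = -1 := by rw [h2]; simp

variable {k t : ℕ} {F : Type} [Field F] [Fintype F] [DecidableEq F]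

lemma tangent_nonzero (S : Finset (Fin k → F)) (T : Finset (Fin k → F) → (Fin k → F) → F)
    (hT : IsTangentFamily t S T) (Y : Finset (Fin k → F)) (hYS : Y ⊆ S) (hYc : Y.card = k - 2)
    (s : Fin k → F) (hs : s ∈ S) (hsY : s ∉ Y) : T Y s ≠ 0 := by
  obtain ⟨Φ, -, -, -, h4, h5⟩ := hT Y hYS hYc
  rw [h5]
  exact Finset.prod_ne_zero_iff.mpr fun α hα => h4 α hα s hs hsY

lemma tangent_pair (S : Finset (Fin k → F))
    (harc : ∀ A ⊆ S, A.card = k → Submodule.span F (A : Set (Fin k → F)) = ⊤)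
    (hq : S.card + t = Fintype.card F + k - 1) (hSk : k ≤ S.card) (hk : 2 ≤ k)
    (T : Finset (Fin k → F) → (Fin k → F) → F) (hT : IsTangentFamily t S T)
    (Y : Finset (Fin k → F)) (hYS : Y ⊆ S) (hYc : Y.card = k - 2)
    (a b : Fin k → F) (ha : a ∈ S) (hb : b ∈ S) (haY : a ∉ Y) (hbY : b ∉ Y) (hab : a ≠ b)
    (φa φb : (Fin k → F) →ₗ[F] F)
    (hφaa : φa a = 1) (hφab : φa b = 0) (hφaY : ∀ y ∈ Y, φa y = 0)
    (hφba : φb a = 0) (hφbb : φb b = 1) (hφbY : ∀ y ∈ Y, φb y = 0) :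
    T Y b * (T Y a)⁻¹
      = (-1 : F) ^ (S.card - k + 1) * ∏ c ∈ S \ insert a (insert b Y), φb c * (φa c)⁻¹ := by
  obtain ⟨Φ, hΦcard, hΦind, hΦY, hΦS, hΦT⟩ := hT Y hYS hYc
  set C := S \ insert a (insert b Y) with hCdef
  have haib : a ∉ insert b Y := by simp [hab, haY]
  have hWS : insert a (insert b Y) ⊆ S := by
    intro w hw; simp only [mem_insert] at hw
    rcases hw with rfl | rfl | hw
    · exact ha
    · exact hb
    · exact hYS hw
  have hWcard : (insert a (insert b Y)).card = k := by
    rw [card_insert_of_notMem haib, card_insert_of_notMem hbY, hYc]; omega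
  have hvan : ∀ W : Finset (Fin k → F), W ⊆ S → W.card = k →
      ∀ γ : (Fin k → F) →ₗ[F] F, (∀ w ∈ W, γ w = 0) → γ = 0 := by
    intro W hWS' hWc γ hγ
    exact LinearMap.ext_on (harc W hWS' hWc) (fun x hx => by simpa using hγ x hx)
  have hCmem : ∀ c ∈ C, c ∈ S ∧ c ≠ a ∧ c ≠ b ∧ c ∉ Y := by
    intro c hc
    rw [hCdef, mem_sdiff] at hc
    simp only [mem_insert, not_or] at hc
    tauto
  have hφanz : ∀ c ∈ C, φa c ≠ 0 := by
    intro c hc h0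
    obtain ⟨hcS, hca, hcb, hcY⟩ := hCmem c hc
    have hbc : b ∉ insert c Y := by simp [hbY, Ne.symm hcb]
    have hzero : φa = 0 := by
      refine hvan (insert b (insert c Y)) ?_ ?_ φa ?_
      · intro w hw; simp only [mem_insert] at hw
        rcases hw with rfl | rfl | hw
        · exact hb
        · exact hcS
        · exact hYS hw
      · rw [card_insert_of_notMem hbc, card_insert_of_notMem hcY, hYc]; omega
      · intro w hw; simp only [mem_insert] at hw
        rcases hw with rfl | rfl | hw
        · exact hφab
        · exact h0
        · exact hφaY w hw
    rw [hzero] at hφaa; simpa using hφaa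
  have hφbnz : ∀ c ∈ C, φb c ≠ 0 := by
    intro c hc h0
    obtain ⟨hcS, hca, hcb, hcY⟩ := hCmem c hc
    have hac : a ∉ insert c Y := by simp [haY, Ne.symm hca]
    have hzero : φb = 0 := by
      refine hvan (insert a (insert c Y)) ?_ ?_ φb ?_
      · intro w hw; simp only [mem_insert] at hw
        rcases hw with rfl | rfl | hw
        · exact ha
        · exact hcS
        · exact hYS hw
      · rw [card_insert_of_notMem hac, card_insert_of_notMem hcY, hYc]; omega
      · intro w hw; simp only [mem_insert] at hw
        rcases hw with rfl | rfl | hw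
        · exact hφba
        · exact h0
        · exact hφbY w hw
    rw [hzero] at hφbb; simpa using hφbb
  have hdecomp : ∀ γ : (Fin k → F) →ₗ[F] F, (∀ y ∈ Y, γ y = 0) →
      γ = γ a • φa + γ b • φb := by
    intro γ hγ
    have h0 : γ - (γ a • φa + γ b • φb) = 0 := by
      refine hvan (insert a (insert b Y)) hWS hWcard _ ?_
      intro w hw; simp only [mem_insert] at hw
      rcases hw with rfl | rfl | hw
      · simp [hφaa, hφba]
      · simp [hφab, hφbb, hγ]
      · simp [hφaY w hw, hφbY w hw, hγ w hw]
    exact sub_eq_zero.mp h0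
  have hαa : ∀ α ∈ Φ, α a ≠ 0 := fun α hα => hΦS α hα a ha haY
  have hαb : ∀ α ∈ Φ, α b ≠ 0 := fun α hα => hΦS α hα b hb hbY
  set uΦ : ((Fin k → F) →ₗ[F] F) → F := fun α => α b * (α a)⁻¹ with huΦ
  set uC : (Fin k → F) → F := fun c => -(φa c * (φb c)⁻¹) with huC
  have hinjΦ : ∀ α ∈ Φ, ∀ β ∈ Φ, uΦ α = uΦ β → α = β := by
    intro α hα β hβ he
    by_contra hne
    apply hΦind α hα β hβ hne (α a * (β a)⁻¹)
    have h1 : α a * (β a)⁻¹ * β a = α a := by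
      rw [mul_assoc, inv_mul_cancel₀ (hαa β hβ), mul_one]
    have h2 : α a * (β a)⁻¹ * β b = α b := by
      have hdd : α b / α a = β b / β a := by
        rw [div_eq_mul_inv, div_eq_mul_inv]; exact he
      have h1' : α b * β a = β b * α a := (div_eq_div_iff (hαa α hα) (hαa β hβ)).mp hdd
      rw [show α a * (β a)⁻¹ * β b = (α a * β b) / β a by rw [div_eq_mul_inv]; ring,
        div_eq_iff (hαa β hβ)]
      linear_combination -h1'
    have h0 : α - (α a * (β a)⁻¹) • β = 0 := by
      refine hvan (insert a (insert b Y)) hWS hWcard _ ?_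
      intro w hw; simp only [mem_insert] at hw
      rcases hw with rfl | rfl | hw
      · simp only [LinearMap.sub_apply, LinearMap.smul_apply, smul_eq_mul]
        rw [h1]; ring
      · simp only [LinearMap.sub_apply, LinearMap.smul_apply, smul_eq_mul]
        rw [h2]; ring
      · simp [hΦY α hα w hw, hΦY β hβ w hw]
    exact sub_eq_zero.mp h0
  have hinjC : ∀ c ∈ C, ∀ c' ∈ C, uC c = uC c' → c = c' := by
    intro c hc c' hc' he
    by_contra hne
    obtain ⟨hcS, hca, hcb, hcY⟩ := hCmem c hc
    obtain ⟨hc'S, hc'a, hc'b, hc'Y⟩ := hCmem c' hc'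
    have h1 : φa c / φb c = φa c' / φb c' := by
      rw [div_eq_mul_inv, div_eq_mul_inv]; exact neg_inj.mp he
    have h2 : φa c * φb c' = φa c' * φb c :=
      (div_eq_div_iff (hφbnz c hc) (hφbnz c' hc')).mp h1
    set γ : (Fin k → F) →ₗ[F] F := φa c • φb - φb c • φa with hγdef
    have hγ0 : γ = 0 := by
      refine hvan (insert c (insert c' Y)) ?_ ?_ γ ?_
      · intro w hw; simp only [mem_insert] at hw
        rcases hw with rfl | rfl | hw
        · exact hcS
        · exact hc'S
        · exact hYS hw
      · have hcc' : c ∉ insert c' Y := by simp [hne, hcY]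
        rw [card_insert_of_notMem hcc', card_insert_of_notMem hc'Y, hYc]; omega
      · intro w hw; simp only [mem_insert] at hw
        rcases hw with rfl | rfl | hw
        · simp only [hγdef, LinearMap.sub_apply, LinearMap.smul_apply, smul_eq_mul]
          ring
        · simp only [hγdef, LinearMap.sub_apply, LinearMap.smul_apply, smul_eq_mul]
          linear_combination h2
        · simp [hγdef, hφaY w hw, hφbY w hw]
    have hγb : γ b = 0 := by rw [hγ0]; rfl
    simp only [hγdef, LinearMap.sub_apply, LinearMap.smul_apply, smul_eq_mul,
      hφbb, hφab, mul_one, mul_zero, sub_zero] at hγb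
    exact hφanz c hc hγb
  have hnzΦ : ∀ α ∈ Φ, uΦ α ≠ 0 := fun α hα =>
    mul_ne_zero (hαb α hα) (inv_ne_zero (hαa α hα))
  have hnzC : ∀ c ∈ C, uC c ≠ 0 := by
    intro c hc
    simp only [huC, neg_ne_zero]
    exact mul_ne_zero (hφanz c hc) (inv_ne_zero (hφbnz c hc))
  have hdisjim : Disjoint (Φ.image uΦ) (C.image uC) := by
    rw [Finset.disjoint_left]
    rintro x hx hx'
    obtain ⟨α, hα, rfl⟩ := Finset.mem_image.mp hx
    obtain ⟨c, hc, hec⟩ := Finset.mem_image.mp hx'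
    obtain ⟨hcS, hca, hcb, hcY⟩ := hCmem c hc
    have hαc := hΦS α hα c hcS hcY
    have hda := hdecomp α (hΦY α hα)
    have hval : α c = α a * φa c + α b * φb c := by
      conv_lhs => rw [hda]
      simp
    have he : -(φa c * (φb c)⁻¹) = α b * (α a)⁻¹ := hec
    apply hαc
    rw [hval]
    have h3 : α b * φb c = -(φa c) * α a := by
      calc α b * φb c = (α b * (α a)⁻¹) * (α a * φb c) := by
            rw [show (α b * (α a)⁻¹) * (α a * φb c) = α b * φb c * ((α a)⁻¹ * α a) by ring,
              inv_mul_cancel₀ (hαa α hα), mul_one]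
        _ = -(φa c * (φb c)⁻¹) * (α a * φb c) := by rw [← he]
        _ = -(φa c) * α a * ((φb c)⁻¹ * φb c) := by ring
        _ = -(φa c) * α a := by rw [inv_mul_cancel₀ (hφbnz c hc), mul_one]
    linear_combination h3
  have hsub : (Φ.image uΦ) ∪ (C.image uC) ⊆ Finset.univ.erase 0 := by
    intro x hx
    rcases Finset.mem_union.mp hx with hx | hx
    · obtain ⟨α, hα, rfl⟩ := Finset.mem_image.mp hx
      exact Finset.mem_erase.mpr ⟨hnzΦ α hα, Finset.mem_univ _⟩
    · obtain ⟨c, hc, rfl⟩ := Finset.mem_image.mp hx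
      exact Finset.mem_erase.mpr ⟨hnzC c hc, Finset.mem_univ _⟩
  have hCcard : C.card = S.card - k := by
    rw [hCdef, card_sdiff_of_subset hWS, hWcard]
  have hq1 : 1 ≤ Fintype.card F := Fintype.card_pos
  have hcards : ((Φ.image uΦ) ∪ (C.image uC)).card = Fintype.card F - 1 := by
    rw [card_union_of_disjoint hdisjim,
      Finset.card_image_of_injOn (fun x hx y hy hxy => hinjΦ x (by simpa using hx) y (by simpa using hy) hxy),
      Finset.card_image_of_injOn (fun x hx y hy hxy => hinjC x (by simpa using hx) y (by simpa using hy) hxy),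
      hΦcard, hCcard]
    omega
  have heq : (Φ.image uΦ) ∪ (C.image uC) = Finset.univ.erase 0 := by
    apply Finset.eq_of_subset_of_card_le hsub
    rw [Finset.card_erase_of_mem (Finset.mem_univ _), Finset.card_univ, hcards]
  have hprod : (∏ α ∈ Φ, uΦ α) * (∏ c ∈ C, uC c) = -1 := by
    have hu := prod_ne_zero_eq_neg_one F
    rw [← heq, Finset.prod_union hdisjim, Finset.prod_image hinjΦ,
      Finset.prod_image hinjC] at hu
    exact hu
  have hprodΦ : ∏ α ∈ Φ, uΦ α = T Y b * (T Y a)⁻¹ := by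
    rw [hΦT b, hΦT a, huΦ]
    rw [Finset.prod_mul_distrib, Finset.prod_inv_distrib]
  set m := S.card - k with hm
  set P := ∏ c ∈ C, φa c * (φb c)⁻¹ with hP
  set Q := ∏ c ∈ C, φb c * (φa c)⁻¹ with hQ
  have hprodC : ∏ c ∈ C, uC c = (-1 : F) ^ m * P := by
    calc ∏ c ∈ C, uC c = ∏ c ∈ C, (-1) * (φa c * (φb c)⁻¹) := by
          apply Finset.prod_congr rfl; intro c hc; rw [huC]; ring
      _ = (-1:F)^C.card * P := by rw [Finset.prod_mul_distrib, Finset.prod_const, hP]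
      _ = (-1:F)^m * P := by rw [hCcard]
  have hPQ : P * Q = 1 := by
    rw [hP, hQ, ← Finset.prod_mul_distrib]
    apply Finset.prod_eq_one
    intro c hc
    have h1 := hφanz c hc
    have h2 := hφbnz c hc
    field_simp
  have key : (T Y b * (T Y a)⁻¹) * ((-1:F)^m * P) = -1 := by
    rw [← hprodΦ, ← hprodC]; exact hprod
  have hsq : ((-1:F)^m) * ((-1:F)^m) = 1 := by
    rw [← mul_pow]; norm_num
  calc T Y b * (T Y a)⁻¹
      = (T Y b * (T Y a)⁻¹) * (((-1:F)^m * P) * ((-1:F)^m * Q)) := by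
        rw [show ((-1:F)^m * P) * ((-1:F)^m * Q) = (((-1:F)^m) * ((-1:F)^m)) * (P * Q) by ring,
          hsq, hPQ]; ring
    _ = ((T Y b * (T Y a)⁻¹) * ((-1:F)^m * P)) * ((-1:F)^m * Q) := by ring
    _ = -1 * ((-1:F)^m * Q) := by rw [key]
    _ = (-1:F)^(m+1) * Q := by rw [pow_succ]; ring


section Triangle
variable {k t : ℕ} {F : Type} [Field F] [Fintype F] [DecidableEq F]

set_option maxHeartbeats 2000000 in
lemma tangent_triangle (S : Finset (Fin k → F))
    (harc : ∀ A ⊆ S, A.card = k →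
      LinearIndependent F (fun v : {x // x ∈ A} => (v : Fin k → F)) ∧
      Submodule.span F (A : Set (Fin k → F)) = ⊤)
    (hq : S.card + t = Fintype.card F + k - 1) (hSk : k ≤ S.card) (hk : 3 ≤ k)
    (T : Finset (Fin k → F) → (Fin k → F) → F) (hT : IsTangentFamily t S T)
    (E : Finset (Fin k → F)) (hES : E ⊆ S) (hEc : E.card = k - 3)
    (x y z : Fin k → F) (hx : x ∈ S) (hy : y ∈ S) (hz : z ∈ S)
    (hxE : x ∉ E) (hyE : y ∉ E) (hzE : z ∉ E)
    (hxy : x ≠ y) (hxz : x ≠ z) (hyz : y ≠ z) :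
    T (insert x E) y * (T (insert y E) z * T (insert z E) x)
      = (-1:F)^(t+1) * (T (insert x E) z * (T (insert z E) y * T (insert y E) x)) := by
  have harc' : ∀ A ⊆ S, A.card = k → Submodule.span F (A : Set (Fin k → F)) = ⊤ :=
    fun A hA hc => (harc A hA hc).2
  set W : Finset (Fin k → F) := insert x (insert y (insert z E)) with hWdef
  have hxW : x ∈ W := by simp [hWdef]
  have hyW : y ∈ W := by simp [hWdef]
  have hzW : z ∈ W := by simp [hWdef]
  have hEW : ∀ e ∈ E, e ∈ W := by intro e he; simp [hWdef, he]
  have hWS : W ⊆ S := by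
    intro w hw; simp only [hWdef, mem_insert] at hw
    rcases hw with rfl | rfl | rfl | hw
    · exact hx
    · exact hy
    · exact hz
    · exact hES hw
  have hWcard : W.card = k := by
    rw [hWdef, card_insert_of_notMem (by simp [hxy, hxz, hxE]),
      card_insert_of_notMem (by simp [hyz, hyE]),
      card_insert_of_notMem hzE, hEc]
    omega
  obtain ⟨hli, hsp⟩ := harc W hWS hWcard
  let bW : Module.Basis {v // v ∈ W} F (Fin k → F) :=
    Module.Basis.mk hli (by rw [show Set.range (fun v : {x // x ∈ W} => (v : Fin k → F)) = (W : Set (Fin k → F)) from Subtype.range_coe, hsp])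
  have hcoord : ∀ (v w : Fin k → F) (hv : v ∈ W) (hw : w ∈ W),
      bW.coord ⟨v, hv⟩ w = if w = v then 1 else 0 := by
    intro v w hv hw
    have hval : bW.coord ⟨v, hv⟩ (bW ⟨w, hw⟩)
        = if (⟨w, hw⟩ : {u // u ∈ W}) = ⟨v, hv⟩ then 1 else 0 := by
      rw [Module.Basis.coord_apply, Module.Basis.repr_self, Finsupp.single_apply]
    have hbw : bW ⟨w, hw⟩ = w := by simp [bW, Module.Basis.mk_apply]
    rw [hbw] at hval
    rw [hval]
    by_cases hwv : w = v
    · rw [if_pos hwv, if_pos (Subtype.ext hwv)]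
    · rw [if_neg hwv, if_neg (fun hh => hwv (congrArg Subtype.val hh))]
  set φx := bW.coord ⟨x, hxW⟩ with hφx
  set φy := bW.coord ⟨y, hyW⟩ with hφy
  set φz := bW.coord ⟨z, hzW⟩ with hφz
  -- coordinates nonzero outside W
  have hφnz : ∀ (v : Fin k → F) (hv : v ∈ W), ∀ c ∈ S \ W, bW.coord ⟨v, hv⟩ c ≠ 0 := by
    intro v hv c hc h0
    rw [mem_sdiff] at hc
    obtain ⟨hcS, hcW⟩ := hc
    have hcerase : c ∉ W.erase v := fun hmem => hcW (mem_of_mem_erase hmem)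
    have hcard' : (insert c (W.erase v)).card = k := by
      rw [card_insert_of_notMem hcerase, card_erase_of_mem hv, hWcard]
      have : 0 < k := by omega
      omega
    have hsub' : insert c (W.erase v) ⊆ S := by
      intro w hw; rcases mem_insert.mp hw with rfl | hw
      · exact hcS
      · exact hWS (mem_of_mem_erase hw)
    have hzero : bW.coord ⟨v, hv⟩ = 0 := by
      apply LinearMap.ext_on (harc' _ hsub' hcard')
      intro w hw
      rcases mem_insert.mp (by exact_mod_cast hw) with rfl | hw'
      · simpa using h0
      · have hwW := mem_of_mem_erase hw'
        have hwv := ne_of_mem_erase hw'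
        simp [hcoord v w hv hwW, hwv]
    have : bW.coord ⟨v, hv⟩ v = 1 := by rw [hcoord v v hv hv]; simp
    rw [hzero] at this
    simpa using this
  -- three applications of the pair lemma
  have hcx : (insert x E).card = k - 2 := by
    rw [card_insert_of_notMem hxE, hEc]; omega
  have hcy : (insert y E).card = k - 2 := by
    rw [card_insert_of_notMem hyE, hEc]; omega
  have hcz : (insert z E).card = k - 2 := by
    rw [card_insert_of_notMem hzE, hEc]; omega
  have hsx : insert x E ⊆ S := by
    intro w hw; rcases mem_insert.mp hw with rfl | hw; exacts [hx, hES hw]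
  have hsy : insert y E ⊆ S := by
    intro w hw; rcases mem_insert.mp hw with rfl | hw; exacts [hy, hES hw]
  have hsz : insert z E ⊆ S := by
    intro w hw; rcases mem_insert.mp hw with rfl | hw; exacts [hz, hES hw]
  have hk2 : 2 ≤ k := by omega
  have heE : ∀ e ∈ E, e ≠ x ∧ e ≠ y ∧ e ≠ z := by
    intro e he
    exact ⟨fun hh => hxE (hh ▸ he), fun hh => hyE (hh ▸ he), fun hh => hzE (hh ▸ he)⟩
  have hφxx : φx x = 1 := by rw [hφx, hcoord x x hxW hxW]; simp
  have hφxy : φx y = 0 := by rw [hφx, hcoord x y hxW hyW]; rw [if_neg (fun hh => hxy hh.symm)]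
  have hφxz : φx z = 0 := by rw [hφx, hcoord x z hxW hzW]; rw [if_neg (fun hh => hxz hh.symm)]
  have hφyx : φy x = 0 := by rw [hφy, hcoord y x hyW hxW]; rw [if_neg (fun hh => hxy hh)]
  have hφyy : φy y = 1 := by rw [hφy, hcoord y y hyW hyW]; simp
  have hφyz : φy z = 0 := by rw [hφy, hcoord y z hyW hzW]; rw [if_neg (fun hh => hyz hh.symm)]
  have hφzx : φz x = 0 := by rw [hφz, hcoord z x hzW hxW]; rw [if_neg (fun hh => hxz hh)]
  have hφzy : φz y = 0 := by rw [hφz, hcoord z y hzW hyW]; rw [if_neg (fun hh => hyz hh)]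
  have hφzz : φz z = 1 := by rw [hφz, hcoord z z hzW hzW]; simp
  have hφxE : ∀ e ∈ E, φx e = 0 := by
    intro e he; rw [hφx, hcoord x e hxW (hEW e he)]
    rw [if_neg (heE e he).1]
  have hφyE : ∀ e ∈ E, φy e = 0 := by
    intro e he; rw [hφy, hcoord y e hyW (hEW e he)]
    rw [if_neg (heE e he).2.1]
  have hφzE : ∀ e ∈ E, φz e = 0 := by
    intro e he; rw [hφz, hcoord z e hzW (hEW e he)]
    rw [if_neg (heE e he).2.2]
  have hvanx : ∀ w ∈ insert x E, φz w = 0 ∧ φy w = 0 := by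
    intro w hw; rcases mem_insert.mp hw with rfl | hw
    · exact ⟨hφzx, hφyx⟩
    · exact ⟨hφzE w hw, hφyE w hw⟩
  have hvany : ∀ w ∈ insert y E, φx w = 0 ∧ φz w = 0 := by
    intro w hw; rcases mem_insert.mp hw with rfl | hw
    · exact ⟨hφxy, hφzy⟩
    · exact ⟨hφxE w hw, hφzE w hw⟩
  have hvanz : ∀ w ∈ insert z E, φy w = 0 ∧ φx w = 0 := by
    intro w hw; rcases mem_insert.mp hw with rfl | hw
    · exact ⟨hφyz, hφxz⟩
    · exact ⟨hφyE w hw, hφxE w hw⟩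
  have hzix : z ∉ insert x E := by
    simp only [mem_insert, not_or]; exact ⟨fun hh => hxz hh.symm, hzE⟩
  have hyix : y ∉ insert x E := by
    simp only [mem_insert, not_or]; exact ⟨fun hh => hxy hh.symm, hyE⟩
  have hxiy : x ∉ insert y E := by
    simp only [mem_insert, not_or]; exact ⟨hxy, hxE⟩
  have hziy : z ∉ insert y E := by
    simp only [mem_insert, not_or]; exact ⟨fun hh => hyz hh.symm, hzE⟩
  have hyiz : y ∉ insert z E := by
    simp only [mem_insert, not_or]; exact ⟨hyz, hyE⟩
  have hxiz : x ∉ insert z E := by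
    simp only [mem_insert, not_or]; exact ⟨hxz, hxE⟩
  have hk2 : 2 ≤ k := by omega
  set m := S.card - k with hm
  have R1 := tangent_pair S harc' hq hSk hk2 T hT (insert x E) hsx hcx z y hz hy
    hzix hyix hyz.symm φz φy hφzz hφzy (fun w hw => (hvanx w hw).1)
    hφyz hφyy (fun w hw => (hvanx w hw).2)
  have R2 := tangent_pair S harc' hq hSk hk2 T hT (insert y E) hsy hcy x z hx hz
    hxiy hziy hxz φx φz hφxx hφxz (fun w hw => (hvany w hw).1)
    hφzx hφzz (fun w hw => (hvany w hw).2)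
  have R3 := tangent_pair S harc' hq hSk hk2 T hT (insert z E) hsz hcz y x hy hx
    hyiz hxiz hxy.symm φy φx hφyy hφyx (fun w hw => (hvanz w hw).1)
    hφxy hφxx (fun w hw => (hvanz w hw).2)
  have hW1 : insert z (insert y (insert x E)) = W := by
    rw [hWdef]; ext w; simp only [mem_insert]; tauto
  have hW2 : insert x (insert z (insert y E)) = W := by
    rw [hWdef]; ext w; simp only [mem_insert]; tauto
  have hW3 : insert y (insert x (insert z E)) = W := by
    rw [hWdef]; ext w; simp only [mem_insert]; tauto
  rw [hW1] at R1
  rw [hW2] at R2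
  rw [hW3] at R3
  have hPmul : (∏ c ∈ S \ W, φy c * (φz c)⁻¹) *
      ((∏ c ∈ S \ W, φz c * (φx c)⁻¹) * (∏ c ∈ S \ W, φx c * (φy c)⁻¹)) = 1 := by
    rw [← Finset.prod_mul_distrib, ← Finset.prod_mul_distrib]
    apply Finset.prod_eq_one
    intro c hc
    have h1 := hφnz y hyW c hc
    have h2 := hφnz z hzW c hc
    have h3 := hφnz x hxW c hc
    rw [← hφy] at h1
    rw [← hφz] at h2
    rw [← hφx] at h3
    field_simp
  have hsq : ((-1:F)^(m+1)) * ((-1:F)^(m+1)) = 1 := by rw [← mul_pow]; norm_num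
  have hbig : (T (insert x E) y * (T (insert x E) z)⁻¹) *
      ((T (insert y E) z * (T (insert y E) x)⁻¹) *
        (T (insert z E) x * (T (insert z E) y)⁻¹)) = (-1:F)^(m+1) := by
    rw [R1, R2, R3]
    calc ((-1:F)^(m+1) * ∏ c ∈ S \ W, φy c * (φz c)⁻¹) *
        (((-1:F)^(m+1) * ∏ c ∈ S \ W, φz c * (φx c)⁻¹) *
          ((-1:F)^(m+1) * ∏ c ∈ S \ W, φx c * (φy c)⁻¹))
        = ((-1:F)^(m+1) * (((-1:F)^(m+1)) * ((-1:F)^(m+1)))) *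
            ((∏ c ∈ S \ W, φy c * (φz c)⁻¹) *
              ((∏ c ∈ S \ W, φz c * (φx c)⁻¹) * (∏ c ∈ S \ W, φx c * (φy c)⁻¹))) := by
          ring
      _ = (-1:F)^(m+1) := by rw [hPmul, hsq, mul_one, mul_one]
  have hq1 : 1 ≤ Fintype.card F := Fintype.card_pos
  have hcard1 : ((-1:F))^(Fintype.card F - 1) = 1 :=
    FiniteField.pow_card_sub_one_eq_one (-1) (neg_ne_zero.mpr one_ne_zero)
  have hmt : m + 1 + (t + 1) = (Fintype.card F - 1) + 2 := by omega
  have h2 : ((-1:F))^(m+1) * ((-1:F))^(t+1) = 1 := by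
    rw [← pow_add, hmt, pow_add, hcard1, one_mul]; norm_num
  have h3 : ((-1:F))^(t+1) * ((-1:F))^(t+1) = 1 := by rw [← mul_pow]; norm_num
  have hpow : ((-1:F))^(m+1) = (-1:F)^(t+1) := by
    calc (-1:F)^(m+1) = (-1:F)^(m+1) * ((-1:F)^(t+1) * (-1:F)^(t+1)) := by
          rw [h3, mul_one]
      _ = ((-1:F)^(m+1) * (-1:F)^(t+1)) * (-1:F)^(t+1) := by ring
      _ = (-1:F)^(t+1) := by rw [h2, one_mul]
  rw [hpow] at hbig
  have hTxz : T (insert x E) z ≠ 0 := tangent_nonzero S T hT _ hsx hcx z hz hzix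
  have hTyx : T (insert y E) x ≠ 0 := tangent_nonzero S T hT _ hsy hcy x hx hxiy
  have hTzy : T (insert z E) y ≠ 0 := tangent_nonzero S T hT _ hsz hcz y hy hyiz
  field_simp at hbig
  linear_combination hbig
end Triangle

def swapfn (i j l : ℕ) : ℕ := if l = i then j else if l = j then i else l

lemma swapfn_comm (i j : ℕ) : swapfn i j = swapfn j i := by
  funext l; unfold swapfn; split_ifs <;> omega

lemma swapfn_lt {i j n : ℕ} (hi : i < n) (hj : j < n) {l : ℕ} (hl : l < n) :
    swapfn i j l < n := by
  unfold swapfn; split_ifs <;> omega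

lemma swapfn_invol (i j l : ℕ) : swapfn i j (swapfn i j l) = l := by
  unfold swapfn; split_ifs <;> omega

lemma swapfn_inj {i j l l' : ℕ} (h : swapfn i j l = swapfn i j l') : l = l' := by
  have := congrArg (swapfn i j) h
  rwa [swapfn_invol, swapfn_invol] at this

lemma swapfn_conj {i j : ℕ} (hij : i + 1 < j) (l : ℕ) :
    swapfn i (j-1) (swapfn (j-1) j (swapfn i (j-1) l)) = swapfn i j l := by
  unfold swapfn; split_ifs <;> omega

lemma take_toFinset {α : Type} [DecidableEq α] (d : α) (L : List α) (m : ℕ)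
    (hm : m ≤ L.length) :
    (L.take m).toFinset = (Finset.range m).image (fun i => L.getD i d) := by
  ext v
  simp only [List.mem_toFinset, Finset.mem_image, Finset.mem_range]
  constructor
  · intro hv
    obtain ⟨i, hi, hiv⟩ := List.mem_iff_getElem.mp hv
    have hi' : i < m := by rw [List.length_take] at hi; omega
    refine ⟨i, hi', ?_⟩
    rw [List.getD_eq_getElem L d (by omega), ← List.getElem_take (xs := L) (h := hi)]
    exact hiv
  · rintro ⟨i, hi, rfl⟩
    rw [List.getD_eq_getElem L d (by omega)]
    exact List.mem_iff_getElem.mpr ⟨i, by simp [List.length_take]; omega,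
      (List.getElem_take (xs := L) (h := by simp [List.length_take]; omega))⟩

lemma drop_toFinset {α : Type} [DecidableEq α] (d : α) (L : List α) (m : ℕ) :
    (L.drop m).toFinset = (Finset.Ico m L.length).image (fun i => L.getD i d) := by
  ext v
  simp only [List.mem_toFinset, Finset.mem_image, Finset.mem_Ico]
  constructor
  · intro hv
    obtain ⟨i, hi, hiv⟩ := List.mem_iff_getElem.mp hv
    have hi' : i < L.length - m := by simpa [List.length_drop] using hi
    refine ⟨m + i, ⟨by omega, by omega⟩, ?_⟩
    rw [List.getD_eq_getElem L d (by omega), ← List.getElem_drop (xs := L) (h := hi)]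
    exact hiv
  · rintro ⟨i, ⟨hmi, hi⟩, rfl⟩
    rw [List.getD_eq_getElem L d (by omega)]
    refine List.mem_iff_getElem.mpr ⟨i - m, by simp [List.length_drop]; omega, ?_⟩
    rw [List.getElem_drop (xs := L)]
    congr 1
    omega

def segrePf {F : Type} [Field F] [DecidableEq F] {k : ℕ}
    (T : Finset (Fin k → F) → (Fin k → F) → F) (D : Finset (Fin k → F))
    (a g : ℕ → (Fin k → F)) (n : ℕ) : F :=
  ∏ m ∈ Finset.range n,
    (T (D ∪ (Finset.range m).image a ∪ (Finset.Ico (m+1) n).image g) (a m) *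
      (T (D ∪ (Finset.range m).image a ∪ (Finset.Ico (m+1) n).image g) (g m))⁻¹)

lemma segrePf_congr {F : Type} [Field F] [DecidableEq F] {k : ℕ}
    (T : Finset (Fin k → F) → (Fin k → F) → F) (D : Finset (Fin k → F))
    (a g g' : ℕ → (Fin k → F)) (n : ℕ) (hgg : ∀ m < n, g m = g' m) :
    segrePf T D a g n = segrePf T D a g' n := by
  unfold segrePf
  apply Finset.prod_congr rfl
  intro m hm
  rw [mem_range] at hm
  have himg : (Finset.Ico (m+1) n).image g = (Finset.Ico (m+1) n).image g' := by
    apply Finset.image_congr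
    intro l hl
    simp only [coe_Ico, Set.mem_Ico] at hl
    exact hgg l hl.2
  rw [himg, hgg m hm]

lemma segreP_eq {F : Type} [Field F] [DecidableEq F] {k : ℕ}
    (T : Finset (Fin k → F) → (Fin k → F) → F) (D : Finset (Fin k → F))
    (A B : List (Fin k → F)) (n : ℕ) (hA : A.length = n) (hB : B.length = n) :
    segreP T D A B = segrePf T D (fun m => A.getD m 0) (fun m => B.getD m 0) n := by
  unfold segreP segrePf
  rw [hA]
  apply Finset.prod_congr rfl
  intro m hm
  rw [mem_range] at hm
  rw [take_toFinset 0 A m (by omega), drop_toFinset 0 B (m+1), hB]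


section Adjacent
variable {k t : ℕ} {F : Type} [Field F] [Fintype F] [DecidableEq F]

lemma segrePf_adj (S : Finset (Fin k → F))
    (harc : ∀ A ⊆ S, A.card = k →
      LinearIndependent F (fun v : {x // x ∈ A} => (v : Fin k → F)) ∧
      Submodule.span F (A : Set (Fin k → F)) = ⊤)
    (hq : S.card + t = Fintype.card F + k - 1) (hSk : k ≤ S.card) (hk : 3 ≤ k)
    (T : Finset (Fin k → F) → (Fin k → F) → F) (hT : IsTangentFamily t S T)
    (D : Finset (Fin k → F)) (hD : D ⊆ S) {n : ℕ} (hDcard : D.card + n + 1 = k)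
    (a g : ℕ → (Fin k → F))
    (hmem : ∀ m < n, a m ∈ S ∧ g m ∈ S)
    (hdisjD : ∀ m < n, a m ∉ D ∧ g m ∉ D)
    (hinj : ∀ m < n, ∀ m' < n, (a m = a m' → m = m') ∧ a m ≠ g m' ∧ (g m = g m' → m = m'))
    (i : ℕ) (hi : i + 1 < n) :
    segrePf T D a (fun l => g (swapfn i (i+1) l)) n = (-1:F)^(t+1) * segrePf T D a g n := by
  set g' : ℕ → (Fin k → F) := fun l => g (swapfn i (i+1) l) with hg'
  set U : ℕ → Finset (Fin k → F) :=
    fun m => D ∪ (Finset.range m).image a ∪ (Finset.Ico (m+1) n).image g with hU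
  set U' : ℕ → Finset (Fin k → F) :=
    fun m => D ∪ (Finset.range m).image a ∪ (Finset.Ico (m+1) n).image g' with hU'
  set f : ℕ → F := fun m => T (U m) (a m) * (T (U m) (g m))⁻¹ with hf
  set f' : ℕ → F := fun m => T (U' m) (a m) * (T (U' m) (g' m))⁻¹ with hf'
  -- factors away from i, i+1 agree
  have hfar : ∀ m, m < n → m ≠ i → m ≠ i + 1 → f' m = f m := by
    intro m hm hmi hmi1
    have hgm : g' m = g m := by
      rw [hg']; simp only; rw [show swapfn i (i+1) m = m by unfold swapfn; split_ifs <;> omega]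
    have himg : (Finset.Ico (m+1) n).image g' = (Finset.Ico (m+1) n).image g := by
      rcases lt_or_gt_of_ne hmi with hlt | hgt
      · -- m < i : swap permutes the interval
        ext v
        simp only [Finset.mem_image, Finset.mem_Ico]
        constructor
        · rintro ⟨l, hl, rfl⟩
          exact ⟨swapfn i (i+1) l, by constructor <;> (unfold swapfn; split_ifs <;> omega), rfl⟩
        · rintro ⟨l, hl, rfl⟩
          refine ⟨swapfn i (i+1) l, by constructor <;> (unfold swapfn; split_ifs <;> omega), ?_⟩
          rw [hg']; simp only [swapfn_invol]
        -- m > i+1 : swap is identity on the interval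
      · apply Finset.image_congr
        intro l hl
        simp only [coe_Ico, Set.mem_Ico] at hl
        rw [hg']; simp only
        rw [show swapfn i (i+1) l = l by unfold swapfn; split_ifs <;> omega]
    rw [hf', hf]; simp only
    rw [hU', hU]; simp only
    rw [himg, hgm]
  -- the common base E
  set E : Finset (Fin k → F) :=
    D ∪ (Finset.range i).image a ∪ (Finset.Ico (i+2) n).image g with hE
  have himgE : (Finset.Ico (i+2) n).image g' = (Finset.Ico (i+2) n).image g := by
    apply Finset.image_congr
    intro l hl
    simp only [coe_Ico, Set.mem_Ico] at hl
    rw [hg']; simp only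
    rw [show swapfn i (i+1) l = l by unfold swapfn; split_ifs <;> omega]
  have hIco1 : Finset.Ico (i+1) n = insert (i+1) (Finset.Ico (i+2) n) := by
    exact (Finset.insert_Ico_add_one_left_eq_Ico (by omega : i + 1 < n)).symm
  have hg'i : g' i = g (i+1) := by
    rw [hg']; simp only
    rw [show swapfn i (i+1) i = i+1 by unfold swapfn; split_ifs <;> omega]
  have hg'i1 : g' (i+1) = g i := by
    rw [hg']; simp only
    rw [show swapfn i (i+1) (i+1) = i by unfold swapfn; split_ifs <;> omega]
  have hU'i : U' i = insert (g i) E := by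
    rw [hU']; simp only
    rw [hIco1, Finset.image_insert, himgE, hg'i1, hE, Finset.union_insert]
  have hUi : U i = insert (g (i+1)) E := by
    rw [hU]; simp only
    rw [hIco1, Finset.image_insert, hE, Finset.union_insert]
  have hrange1 : Finset.range (i+1) = insert i (Finset.range i) := Finset.range_add_one
  have hU'i1 : U' (i+1) = insert (a i) E := by
    rw [hU']; simp only
    rw [show i+1+1 = i+2 from rfl, himgE, hrange1, Finset.image_insert,
      Finset.union_insert, Finset.insert_union, hE]
  have hUi1 : U (i+1) = insert (a i) E := by
    rw [hU]; simp only
    rw [show i+1+1 = i+2 from rfl, hrange1, Finset.image_insert,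
      Finset.union_insert, Finset.insert_union, hE]
  have hES : E ⊆ S := by
    rw [hE]
    intro v hv
    rcases Finset.mem_union.mp hv with hv | hv
    · rcases Finset.mem_union.mp hv with hv | hv
      · exact hD hv
      · obtain ⟨l, hl, rfl⟩ := Finset.mem_image.mp hv
        rw [Finset.mem_range] at hl
        exact (hmem l (by omega)).1
    · obtain ⟨l, hl, rfl⟩ := Finset.mem_image.mp hv
      rw [Finset.mem_Ico] at hl
      exact (hmem l (by omega)).2
  have hnotE : ∀ v, v ∉ D → (∀ l, l < i → v ≠ a l) → (∀ l, i+2 ≤ l → l < n → v ≠ g l) →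
      v ∉ E := by
    intro v h1 h2 h3 hv
    rw [hE] at hv
    rcases Finset.mem_union.mp hv with hv | hv
    · rcases Finset.mem_union.mp hv with hv | hv
      · exact h1 hv
      · obtain ⟨l, hl, he⟩ := Finset.mem_image.mp hv
        rw [Finset.mem_range] at hl
        exact h2 l hl he.symm
    · obtain ⟨l, hl, he⟩ := Finset.mem_image.mp hv
      rw [Finset.mem_Ico] at hl
      exact h3 l hl.1 hl.2 he.symm
  have hxE : a i ∉ E := hnotE _ (hdisjD i (by omega)).1
    (fun l hl he => by have := (hinj i (by omega) l (by omega)).1 he; omega)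
    (fun l hl1 hl2 he => (hinj i (by omega) l hl2).2.1 he)
  have hyE : g (i+1) ∉ E := hnotE _ (hdisjD (i+1) hi).2
    (fun l hl he => (hinj l (by omega) (i+1) hi).2.1 he.symm)
    (fun l hl1 hl2 he => by have := (hinj (i+1) hi l hl2).2.2 he; omega)
  have hzE : g i ∉ E := hnotE _ (hdisjD i (by omega)).2
    (fun l hl he => (hinj l (by omega) i (by omega)).2.1 he.symm)
    (fun l hl1 hl2 he => by have := (hinj i (by omega) l hl2).2.2 he; omega)
  have hxy : a i ≠ g (i+1) := (hinj i (by omega) (i+1) hi).2.1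
  have hxz : a i ≠ g i := (hinj i (by omega) i (by omega)).2.1
  have hyz : g (i+1) ≠ g i := fun he => by
    have := (hinj (i+1) hi i (by omega)).2.2 he; omega
  have hcard_a : ((Finset.range i).image a).card = i := by
    rw [Finset.card_image_of_injOn, Finset.card_range]
    intro l hl l' hl' he
    simp only [coe_range, Set.mem_Iio] at hl hl'
    exact (hinj l (by omega) l' (by omega)).1 he
  have hcard_g : ((Finset.Ico (i+2) n).image g).card = n - (i+2) := by
    rw [Finset.card_image_of_injOn, Nat.card_Ico]
    intro l hl l' hl' he
    simp only [coe_Ico, Set.mem_Ico] at hl hl'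
    exact (hinj l (by omega) l' (by omega)).2.2 he
  have hdisj1 : Disjoint D ((Finset.range i).image a) := by
    rw [Finset.disjoint_right]
    rintro v hv
    obtain ⟨l, hl, rfl⟩ := Finset.mem_image.mp hv
    rw [Finset.mem_range] at hl
    exact (hdisjD l (by omega)).1
  have hdisj2 : Disjoint (D ∪ (Finset.range i).image a) ((Finset.Ico (i+2) n).image g) := by
    rw [Finset.disjoint_right]
    rintro v hv
    obtain ⟨l, hl, rfl⟩ := Finset.mem_image.mp hv
    rw [Finset.mem_Ico] at hl
    intro hv'
    rcases Finset.mem_union.mp hv' with hv' | hv'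
    · exact (hdisjD l (by omega)).2 hv'
    · obtain ⟨l', hl', he⟩ := Finset.mem_image.mp hv'
      rw [Finset.mem_range] at hl'
      exact (hinj l' (by omega) l (by omega)).2.1 he
  have hEcard : E.card = k - 3 := by
    rw [hE, Finset.card_union_of_disjoint hdisj2, Finset.card_union_of_disjoint hdisj1,
      hcard_a, hcard_g]
    omega
  have hxS := (hmem i (by omega)).1
  have hyS := (hmem (i+1) hi).2
  have hzS := (hmem i (by omega)).2
  have htri := tangent_triangle S harc hq hSk hk T hT E hES hEcard
    (a i) (g (i+1)) (g i) hxS hyS hzS hxE hyE hzE hxy hxz hyz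
  have hcx : (insert (a i) E).card = k - 2 := by
    rw [Finset.card_insert_of_notMem hxE, hEcard]; omega
  have hcy : (insert (g (i+1)) E).card = k - 2 := by
    rw [Finset.card_insert_of_notMem hyE, hEcard]; omega
  have hcz : (insert (g i) E).card = k - 2 := by
    rw [Finset.card_insert_of_notMem hzE, hEcard]; omega
  have hsx : insert (a i) E ⊆ S := by rw [Finset.insert_subset_iff]; exact ⟨hxS, hES⟩
  have hsy : insert (g (i+1)) E ⊆ S := by rw [Finset.insert_subset_iff]; exact ⟨hyS, hES⟩
  have hsz : insert (g i) E ⊆ S := by rw [Finset.insert_subset_iff]; exact ⟨hzS, hES⟩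
  have hTxy : T (insert (a i) E) (g (i+1)) ≠ 0 := tangent_nonzero S T hT _ hsx hcx _ hyS
    (by simp only [Finset.mem_insert, not_or]; exact ⟨fun he => hxy he.symm, hyE⟩)
  have hTxz : T (insert (a i) E) (g i) ≠ 0 := tangent_nonzero S T hT _ hsx hcx _ hzS
    (by simp only [Finset.mem_insert, not_or]; exact ⟨fun he => hxz he.symm, hzE⟩)
  have hTyz : T (insert (g (i+1)) E) (g i) ≠ 0 := tangent_nonzero S T hT _ hsy hcy _ hzS
    (by simp only [Finset.mem_insert, not_or]; exact ⟨fun he => hyz he.symm, hzE⟩)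
  have hTzy : T (insert (g i) E) (g (i+1)) ≠ 0 := tangent_nonzero S T hT _ hsz hcz _ hyS
    (by simp only [Finset.mem_insert, not_or]; exact ⟨hyz, hyE⟩)
  have hmain : f' i * f' (i+1) = (-1:F)^(t+1) * (f i * f (i+1)) := by
    rw [hf', hf]; simp only
    rw [hU'i, hU'i1, hUi, hUi1, hg'i, hg'i1]
    field_simp
    linear_combination (T (insert (a i) E) (a (i+1))) * htri
  have hsplit : ∀ (G : ℕ → F), (∏ m ∈ Finset.range n, G m)
      = G i * G (i+1) * ∏ m ∈ ((Finset.range n).erase i).erase (i+1), G m := by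
    intro G
    rw [mul_assoc,
      Finset.mul_prod_erase ((Finset.range n).erase i) G
        (by rw [Finset.mem_erase]; exact ⟨by omega, Finset.mem_range.mpr hi⟩),
      Finset.mul_prod_erase (Finset.range n) G (Finset.mem_range.mpr (by omega))]
  have htail : ∏ m ∈ ((Finset.range n).erase i).erase (i+1), f' m
      = ∏ m ∈ ((Finset.range n).erase i).erase (i+1), f m := by
    apply Finset.prod_congr rfl
    intro m hm
    rw [Finset.mem_erase, Finset.mem_erase, Finset.mem_range] at hm
    exact hfar m hm.2.2 hm.2.1 hm.1
  calc segrePf T D a g' n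
      = f' i * f' (i+1) * ∏ m ∈ ((Finset.range n).erase i).erase (i+1), f' m := hsplit f'
    _ = ((-1:F)^(t+1) * (f i * f (i+1)))
          * ∏ m ∈ ((Finset.range n).erase i).erase (i+1), f m := by rw [hmain, htail]
    _ = (-1:F)^(t+1) * (f i * f (i+1)
          * ∏ m ∈ ((Finset.range n).erase i).erase (i+1), f m) := by ring
    _ = (-1:F)^(t+1) * segrePf T D a g n := by rw [← hsplit f]; rfl

end Adjacent

lemma cond_comp {k : ℕ} {F : Type} [Field F] [DecidableEq F] (S D : Finset (Fin k → F))
    (a g : ℕ → (Fin k → F)) (n i' j' : ℕ) (hi' : i' < n) (hj' : j' < n)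
    (hmem : ∀ m < n, a m ∈ S ∧ g m ∈ S)
    (hdisjD : ∀ m < n, a m ∉ D ∧ g m ∉ D)
    (hinj : ∀ m < n, ∀ m' < n, (a m = a m' → m = m') ∧ a m ≠ g m' ∧ (g m = g m' → m = m')) :
    (∀ m < n, a m ∈ S ∧ g (swapfn i' j' m) ∈ S) ∧
    (∀ m < n, a m ∉ D ∧ g (swapfn i' j' m) ∉ D) ∧
    (∀ m < n, ∀ m' < n, (a m = a m' → m = m') ∧ a m ≠ g (swapfn i' j' m') ∧
      (g (swapfn i' j' m) = g (swapfn i' j' m') → m = m')) := by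
  refine ⟨?_, ?_, ?_⟩
  · intro m hm; exact ⟨(hmem m hm).1, (hmem _ (swapfn_lt hi' hj' hm)).2⟩
  · intro m hm; exact ⟨(hdisjD m hm).1, (hdisjD _ (swapfn_lt hi' hj' hm)).2⟩
  · intro m hm m' hm'
    refine ⟨(hinj m hm m' hm').1, (hinj m hm _ (swapfn_lt hi' hj' hm')).2.1, ?_⟩
    intro he
    exact swapfn_inj ((hinj _ (swapfn_lt hi' hj' hm) _ (swapfn_lt hi' hj' hm')).2.2 he)

lemma segrePf_swap {k t : ℕ} {F : Type} [Field F] [Fintype F] [DecidableEq F]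
    (S : Finset (Fin k → F))
    (harc : ∀ A ⊆ S, A.card = k →
      LinearIndependent F (fun v : {x // x ∈ A} => (v : Fin k → F)) ∧
      Submodule.span F (A : Set (Fin k → F)) = ⊤)
    (hq : S.card + t = Fintype.card F + k - 1) (hSk : k ≤ S.card) (hk : 3 ≤ k)
    (T : Finset (Fin k → F) → (Fin k → F) → F) (hT : IsTangentFamily t S T)
    (D : Finset (Fin k → F)) (hD : D ⊆ S) {n : ℕ} (hDcard : D.card + n + 1 = k)
    (a : ℕ → (Fin k → F)) :
    ∀ (d i j : ℕ) (g : ℕ → (Fin k → F)),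
      (∀ m < n, a m ∈ S ∧ g m ∈ S) →
      (∀ m < n, a m ∉ D ∧ g m ∉ D) →
      (∀ m < n, ∀ m' < n, (a m = a m' → m = m') ∧ a m ≠ g m' ∧ (g m = g m' → m = m')) →
      i < j → j < n → j - i = d →
      segrePf T D a (fun l => g (swapfn i j l)) n = (-1:F)^(t+1) * segrePf T D a g n := by
  intro d
  induction d using Nat.strong_induction_on with
  | _ d IH =>
    intro i j g hmem hdisjD hinj hij hjn hd
    rcases Nat.lt_or_ge (i+1) j with hadj | hadj
    · -- i + 1 < j : conjugation by adjacent transposition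
      obtain ⟨hm1, hd1, hi1⟩ := cond_comp S D a g n i (j-1) (by omega) (by omega)
        hmem hdisjD hinj
      have step1 : segrePf T D a (fun l => g (swapfn i (j-1) l)) n
          = (-1:F)^(t+1) * segrePf T D a g n :=
        IH (j-1-i) (by omega) i (j-1) g hmem hdisjD hinj (by omega) (by omega) rfl
      obtain ⟨hm2, hd2, hi2⟩ := cond_comp S D a (fun l => g (swapfn i (j-1) l)) n (j-1) j
        (by omega) hjn hm1 hd1 hi1
      have step2 : segrePf T D a
            (fun l => (fun l' => g (swapfn i (j-1) l')) (swapfn (j-1) j l)) n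
          = (-1:F)^(t+1) * segrePf T D a (fun l => g (swapfn i (j-1) l)) n :=
        IH 1 (by omega) (j-1) j (fun l => g (swapfn i (j-1) l)) hm1 hd1 hi1
          (by omega) hjn (by omega)
      have step3 : segrePf T D a
            (fun l => (fun l' => g (swapfn i (j-1) (swapfn (j-1) j l'))) (swapfn i (j-1) l)) n
          = (-1:F)^(t+1) * segrePf T D a
              (fun l' => g (swapfn i (j-1) (swapfn (j-1) j l'))) n :=
        IH (j-1-i) (by omega) i (j-1) (fun l' => g (swapfn i (j-1) (swapfn (j-1) j l')))
          hm2 hd2 hi2 (by omega) (by omega) rfl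
      have hfin : ∀ l, l < n →
          (fun l => g (swapfn i (j-1) (swapfn (j-1) j (swapfn i (j-1) l)))) l
            = (fun l => g (swapfn i j l)) l := by
        intro l hl
        simp only
        rw [swapfn_conj hadj]
      have hcongr := segrePf_congr T D a
        (fun l => g (swapfn i (j-1) (swapfn (j-1) j (swapfn i (j-1) l))))
        (fun l => g (swapfn i j l)) n hfin
      rw [← hcongr]
      have hstep3' : segrePf T D a
            (fun l => g (swapfn i (j-1) (swapfn (j-1) j (swapfn i (j-1) l)))) n
          = (-1:F)^(t+1) * segrePf T D a
              (fun l' => g (swapfn i (j-1) (swapfn (j-1) j l'))) n := step3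
      rw [hstep3', step2, step1]
      have hsq : ((-1:F)^(t+1)) * ((-1:F)^(t+1)) = 1 := by rw [← mul_pow]; norm_num
      calc (-1:F)^(t+1) * ((-1:F)^(t+1) * ((-1:F)^(t+1) * segrePf T D a g n))
          = (((-1:F)^(t+1)) * ((-1:F)^(t+1))) * ((-1:F)^(t+1) * segrePf T D a g n) := by
            ring
        _ = (-1:F)^(t+1) * segrePf T D a g n := by rw [hsq, one_mul]
    · -- adjacent case j = i+1
      have hji : j = i + 1 := by omega
      subst hji
      exact segrePf_adj S harc hq hSk hk T hT D hD hDcard a g hmem hdisjD hinj i hjn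

theorem statement7aux {k t n : ℕ} (hk : 3 ≤ k)
    {F : Type} [Field F] [Fintype F] [DecidableEq F]
    (S : Finset (Fin k → F))
    (harc : ∀ A ⊆ S, A.card = k →
      LinearIndependent F (fun v : {x // x ∈ A} => (v : Fin k → F)) ∧
      Submodule.span F (A : Set (Fin k → F)) = ⊤)
    (ht : S.card + t = Fintype.card F + k - 1) (hSk : k ≤ S.card)
    (T : Finset (Fin k → F) → (Fin k → F) → F) (hT : IsTangentFamily t S T)
    (A B : List (Fin k → F)) (hA : A.length = n) (hB : B.length = n)
    (hnd : (A ++ B).Nodup) (hin : ∀ v ∈ A ++ B, v ∈ S)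
    (D : Finset (Fin k → F)) (hD : D ⊆ S) (hDcard : D.card + n + 1 = k)
    (hdisj : ∀ v ∈ A ++ B, v ∉ D)
    (i j : ℕ) (hij : i < j) (hj : j < n)
    (Bstar : List (Fin k → F))
    (hBstar : Bstar = (B.set i (B.getD j 0)).set j (B.getD i 0)) :
    segreP T D A Bstar = (-1 : F) ^ (t + 1) * segreP T D A B := by
  have hi : i < n := by omega
  set a : ℕ → (Fin k → F) := fun m => A.getD m 0 with ha
  set g : ℕ → (Fin k → F) := fun m => B.getD m 0 with hg
  have hlen : (A ++ B).length = n + n := by simp [hA, hB]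
  have hgetA : ∀ m, (hm : m < n) → a m = (A ++ B)[m]'(by omega) := by
    intro m hm
    rw [ha]; simp only
    rw [List.getD_eq_getElem A 0 (by omega)]
    exact (List.getElem_append_left (by omega)).symm
  have hgetB : ∀ m, (hm : m < n) → g m = (A ++ B)[n + m]'(by omega) := by
    intro m hm
    rw [hg]; simp only
    rw [List.getD_eq_getElem B 0 (by omega)]
    rw [List.getElem_append_right (by omega)]
    congr 1
    omega
  have hmem : ∀ m < n, a m ∈ S ∧ g m ∈ S := by
    intro m hm
    constructor
    · rw [hgetA m hm]; exact hin _ (List.getElem_mem _)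
    · rw [hgetB m hm]; exact hin _ (List.getElem_mem _)
  have hdisjD : ∀ m < n, a m ∉ D ∧ g m ∉ D := by
    intro m hm
    constructor
    · rw [hgetA m hm]; exact hdisj _ (List.getElem_mem _)
    · rw [hgetB m hm]; exact hdisj _ (List.getElem_mem _)
  have hinj : ∀ m < n, ∀ m' < n,
      (a m = a m' → m = m') ∧ a m ≠ g m' ∧ (g m = g m' → m = m') := by
    intro m hm m' hm'
    refine ⟨?_, ?_, ?_⟩
    · intro he
      rw [hgetA m hm, hgetA m' hm'] at he
      exact hnd.getElem_inj_iff.mp he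
    · intro he
      rw [hgetA m hm, hgetB m' hm'] at he
      have := hnd.getElem_inj_iff.mp he
      omega
    · intro he
      rw [hgetB m hm, hgetB m' hm'] at he
      have := hnd.getElem_inj_iff.mp he
      omega
  have hBstarlen : Bstar.length = n := by rw [hBstar]; simp [hB]
  have hgB : ∀ m < n, Bstar.getD m 0 = g (swapfn i j m) := by
    intro m hm
    rw [hBstar]
    unfold swapfn
    by_cases hmj : m = j
    · subst hmj
      rw [if_neg (by omega), if_pos rfl]
      rw [List.getD_eq_getElem?_getD, List.getElem?_set, if_pos rfl,
        if_pos (by rw [List.length_set, hB]; omega)]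
      rfl
    · by_cases hmi : m = i
      · subst hmi
        rw [if_pos rfl]
        rw [List.getD_eq_getElem?_getD, List.getElem?_set, if_neg (by omega),
          List.getElem?_set, if_pos rfl, if_pos (by rw [hB]; omega)]
        rfl
      · rw [if_neg hmi, if_neg hmj]
        rw [List.getD_eq_getElem?_getD, List.getElem?_set,
          if_neg (fun hh => hmj hh.symm), List.getElem?_set,
          if_neg (fun hh => hmi hh.symm), ← List.getD_eq_getElem?_getD]
  calc segreP T D A Bstar
      = segrePf T D a (fun m => Bstar.getD m 0) n := segreP_eq T D A Bstar n hA hBstarlen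
    _ = segrePf T D a (fun l => g (swapfn i j l)) n := segrePf_congr T D a _ _ n hgB
    _ = (-1:F)^(t+1) * segrePf T D a g n :=
        segrePf_swap S harc ht hSk hk T hT D hD hDcard a (j-i) i j g hmem hdisjD hinj
          hij hj rfl
    _ = (-1:F)^(t+1) * segreP T D A B := by rw [segreP_eq T D A B n hA hB]

end SegreAux

/-- interchanging two entries of `B` in the Segre product `P_D(A, B)`
multiplies it by `(−1)^{t+1}`:  `P_D(A, B*) = (−1)^{t+1} P_D(A, B)`. -/
theorem statement7 (p h k q t n : ℕ) (hp : p.Prime) (hh : 1 ≤ h) (hq : q = p ^ h)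
    (hk : 3 ≤ k)
    (F : Type) [Field F] [Fintype F] [DecidableEq F] (hF : Fintype.card F = q)
    (S : Finset (Fin k → F))
    (harc : ∀ A ⊆ S, A.card = k →
      LinearIndependent F (fun v : {x // x ∈ A} => (v : Fin k → F)) ∧
      Submodule.span F (A : Set (Fin k → F)) = ⊤)
    (ht : S.card + t = q + k - 1) (ht1 : 1 ≤ t) (hSk : k ≤ S.card)
    (T : Finset (Fin k → F) → (Fin k → F) → F) (hT : IsTangentFamily t S T)
    (A B : List (Fin k → F)) (hA : A.length = n) (hB : B.length = n)
    (hnd : (A ++ B).Nodup) (hin : ∀ v ∈ A ++ B, v ∈ S)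
    (D : Finset (Fin k → F)) (hD : D ⊆ S) (hDcard : D.card + n + 1 = k)
    (hdisj : ∀ v ∈ A ++ B, v ∉ D)
    (i j : ℕ) (hi : i < n) (hj : j < n) (hij : i ≠ j)
    (Bstar : List (Fin k → F))
    (hBstar : Bstar = (B.set i (B.getD j 0)).set j (B.getD i 0)) :
    segreP T D A Bstar = (-1 : F) ^ (t + 1) * segreP T D A B := by
  rw [← hF] at ht
  rcases Nat.lt_or_ge i j with hlt | hge
  · exact statement7aux hk S harc ht hSk T hT A B hA hB hnd hin D hD hDcard hdisj
      i j hlt hj Bstar hBstar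
  · have hji : j < i := by omega
    rw [List.set_comm _ _ hij] at hBstar
    exact statement7aux hk S harc ht hSk T hT A B hA hB hnd hin D hD hDcard hdisj
      j i hji hi Bstar hBstar
end
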